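/- arXiv:1706.04150 — 5 statements merged into one kernel-verified Lean document; each statement's English description precedes it below -/
import Mathlib

section
/- Let P(λ) = ∑_{i=0}^{k} A_i λ^i be an n×n complex matrix polynomial of odd degree k ≥ 3 and let δ ∈ ℂ. Then ‖Δ(δ)‖₂ ≤ √(d₁(δ)) · max_{i=0,…,k} max{1, ‖A_i‖₂}. -/
open Finset Matrix

noncomputable section
namespace MPoly

abbrev Mat (n : ℕ) := Matrix (Fin n) (Fin n) ℂ

variable {n : ℕ}

/-- Euclidean norm of a complex vector. -/
def vecNorm {ι : Type*} [Fintype ι] (x : ι → ℂ) : ℝ :=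
  Real.sqrt (∑ i, ‖x i‖ ^ 2)

/-- Spectral norm (operator norm induced by the Euclidean vector norm). -/
def specNorm {ι κ : Type*} [Fintype ι] [Fintype κ] [DecidableEq κ] (M : Matrix ι κ ℂ) : ℝ :=
  ‖LinearMap.toContinuousLinearMap (Matrix.toEuclideanLin M)‖

/-- Evaluation of the matrix polynomial `P(λ) = ∑_{i=0}^k A_i λ^i`. -/
def Peval (k : ℕ) (A : ℕ → Mat n) (lam : ℂ) : Mat n :=
  ∑ i ∈ Finset.range (k + 1), lam ^ i • A i

/-- Derivative `P′(λ) = ∑_{i=1}^k i A_i λ^{i-1}`. -/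
def Pderiv (k : ℕ) (A : ℕ → Mat n) (lam : ℂ) : Mat n :=
  ∑ i ∈ Finset.range k, (((i : ℂ) + 1) * lam ^ i) • A (i + 1)

/-- `i`-th Horner shift `P_i(λ) = ∑_{j=0}^i λ^j A_{k-i+j}`. -/
def horner (k : ℕ) (A : ℕ → Mat n) (i : ℕ) (lam : ℂ) : Mat n :=
  ∑ j ∈ Finset.range (i + 1), lam ^ j • A (k - i + j)

/-- `P^i(λ) = ∑_{j=0}^i λ^j A_j`. -/
def lowPart (A : ℕ → Mat n) (i : ℕ) (lam : ℂ) : Mat n :=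
  ∑ j ∈ Finset.range (i + 1), lam ^ j • A j

/-- `q`-th (0-indexed) block of `Δ(λ)`. -/
def DeltaBlock (k : ℕ) (A : ℕ → Mat n) (lam : ℂ) (q : ℕ) : Mat n :=
  if q % 2 = 0 then lam ^ ((k - 1 - q) / 2) • (1 : Mat n)
  else lam ^ ((k - q) / 2) • horner k A q lam

/-- The kn×n matrix `Δ(λ)`. -/
def Delta (k : ℕ) (A : ℕ → Mat n) (lam : ℂ) : Matrix (Fin k × Fin n) (Fin n) ℂ :=
  Matrix.of fun p b => DeltaBlock k A lam p.1.1 p.2 b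

/-- The n×kn block-transpose `Δᴮ(λ)`. -/
def DeltaB (k : ℕ) (A : ℕ → Mat n) (lam : ℂ) : Matrix (Fin n) (Fin k × Fin n) ℂ :=
  Matrix.of fun a q => DeltaBlock k A lam q.1.1 a q.2

/-- (0-indexed) blocks of `𝒯₁`. -/
def T1Block (k : ℕ) (A : ℕ → Mat n) (i j : ℕ) : Mat n :=
  if i = j then (if i % 2 = 0 then A (k - i) else 0)
  else if (j = i + 1 ∧ i % 2 = 1) ∨ (i = j + 1 ∧ j % 2 = 1) then 1 else 0

/-- (0-indexed) blocks of `𝒯₀`. -/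
def T0Block (k : ℕ) (A : ℕ → Mat n) (i j : ℕ) : Mat n :=
  if i = j then (if i % 2 = 0 then -(A (k - i - 1)) else 0)
  else if (j = i + 1 ∧ i % 2 = 0) ∨ (i = j + 1 ∧ j % 2 = 0) then 1 else 0

/-- `𝒯₁`. -/
def TT1 (k : ℕ) (A : ℕ → Mat n) : Matrix (Fin k × Fin n) (Fin k × Fin n) ℂ :=
  Matrix.of fun p q => T1Block k A p.1.1 q.1.1 p.2 q.2

/-- `𝒯₀`. -/
def TT0 (k : ℕ) (A : ℕ → Mat n) : Matrix (Fin k × Fin n) (Fin k × Fin n) ℂ :=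
  Matrix.of fun p q => T0Block k A p.1.1 q.1.1 p.2 q.2

/-- The pencil `𝒯_P(λ) = λ𝒯₁ - 𝒯₀`. -/
def Tpencil (k : ℕ) (A : ℕ → Mat n) (lam : ℂ) : Matrix (Fin k × Fin n) (Fin k × Fin n) ℂ :=
  lam • TT1 k A - TT0 k A

/-- Block anti-diagonal flip matrix `R`. -/
def Rmat (k n : ℕ) : Matrix (Fin k × Fin n) (Fin k × Fin n) ℂ :=
  Matrix.of fun p q => if p.1.1 + q.1.1 = k - 1 ∧ p.2 = q.2 then 1 else 0

/-- Block-diagonal sign matrix `S` (block `i` (1-indexed) is `-I` iff `i ≡ 0,1 mod 4`). -/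
def Smat (k n : ℕ) : Matrix (Fin k × Fin n) (Fin k × Fin n) ℂ :=
  Matrix.of fun p q =>
    if p = q then (if (p.1.1 + 1) % 4 = 0 ∨ (p.1.1 + 1) % 4 = 1 then -1 else 1) else 0

/-- `D = diag(I, -I, I, …, I)`. -/
def Dmat (k n : ℕ) : Matrix (Fin k × Fin n) (Fin k × Fin n) ℂ :=
  Matrix.of fun p q => if p = q then ((-1 : ℂ)) ^ p.1.1 else 0

/-- `e_k ⊗ I_n`: kn×n matrix with last block `I_n`. -/
def ekI (k n : ℕ) : Matrix (Fin k × Fin n) (Fin n) ℂ :=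
  Matrix.of fun p b => if p.1.1 = k - 1 ∧ p.2 = b then 1 else 0

/-- The pencil `ℛ_P(λ) = S R 𝒯_P(λ) R S`. -/
def Rpencil (k : ℕ) (A : ℕ → Mat n) (lam : ℂ) : Matrix (Fin k × Fin n) (Fin k × Fin n) ℂ :=
  Smat k n * Rmat k n * Tpencil k A lam * Rmat k n * Smat k n

/-- `max_{i=0:k} ‖A_i‖₂`. -/
def maxA (k : ℕ) (A : ℕ → Mat n) : ℝ :=
  (Finset.range (k + 1)).sup' Finset.nonempty_range_add_one fun i => specNorm (A i)

/-- `max_{i=0:k} max{1, ‖A_i‖₂}`. -/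
def maxA1 (k : ℕ) (A : ℕ → Mat n) : ℝ :=
  (Finset.range (k + 1)).sup' Finset.nonempty_range_add_one fun i => max 1 (specNorm (A i))

/-- The quantity `d₁(δ)`. -/
def d1 (k : ℕ) (δ : ℂ) : ℝ :=
  ∑ r ∈ Finset.range ((k - 1) / 2 + 1), ‖δ‖ ^ (2 * r)
    + ∑ r ∈ Finset.Icc 1 ((k - 1) / 2),
        ((k : ℝ) - 2 * r + 1) * ∑ s ∈ Finset.Icc r (k - r), ‖δ‖ ^ (2 * s)

/-- `ρ₁`. -/
def rho1 (k : ℕ) (A : ℕ → Mat n) : ℝ :=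
  ((Finset.range (k + 1)).sup' Finset.nonempty_range_add_one fun i => max 1 (specNorm (A i) ^ 3))
    / min (specNorm (A k)) (specNorm (A 0))

/-- `ρ₂`. -/
def rho2 (k : ℕ) (A : ℕ → Mat n) : ℝ :=
  min (max 1 (specNorm (A k))) (max 1 (specNorm (A 0))) / maxA k A

/-- `ρ′`. -/
def rho' (k : ℕ) (A : ℕ → Mat n) : ℝ :=
  ((Finset.range (k + 1)).sup' Finset.nonempty_range_add_one fun i => max 1 (specNorm (A i) ^ 2))
    / min (specNorm (A k)) (specNorm (A 0))

/-- `det P(λ)` as a polynomial in `λ`. -/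
def detPoly (k : ℕ) (A : ℕ → Mat n) : Polynomial ℂ :=
  (∑ i ∈ Finset.range (k + 1), (Polynomial.X : Polynomial ℂ) ^ i • (A i).map Polynomial.C).det

/-- `L₁¹` (leading coefficient of `D₁(λ,P)`). -/
def D1L1 (k : ℕ) (A : ℕ → Mat n) : Matrix (Fin k × Fin n) (Fin k × Fin n) ℂ :=
  Matrix.of fun p q =>
    (if p.1.1 = 0 ∧ q.1.1 = 0 then A k
     else if 1 ≤ p.1.1 ∧ 1 ≤ q.1.1 ∧ p.1.1 + q.1.1 ≤ k then -(A (k - p.1.1 - q.1.1))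
     else 0) p.2 q.2

/-- `L₀¹` (trailing coefficient of `D₁(λ,P)`). -/
def D1L0 (k : ℕ) (A : ℕ → Mat n) : Matrix (Fin k × Fin n) (Fin k × Fin n) ℂ :=
  Matrix.of fun p q =>
    (if p.1.1 + q.1.1 + 1 ≤ k then -(A (k - 1 - p.1.1 - q.1.1)) else 0) p.2 q.2

/-- `L₁ᵏ` (leading coefficient of `D_k(λ,P)`). -/
def DkL1 (k : ℕ) (A : ℕ → Mat n) : Matrix (Fin k × Fin n) (Fin k × Fin n) ℂ :=
  Matrix.of fun p q =>
    (if k - 1 ≤ p.1.1 + q.1.1 then A (2 * k - 1 - p.1.1 - q.1.1) else 0) p.2 q.2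

/-- `L₀ᵏ` (trailing coefficient of `D_k(λ,P)`). -/
def DkL0 (k : ℕ) (A : ℕ → Mat n) : Matrix (Fin k × Fin n) (Fin k × Fin n) ℂ :=
  Matrix.of fun p q =>
    (if p.1.1 = k - 1 ∧ q.1.1 = k - 1 then -(A 0)
     else if p.1.1 ≤ k - 2 ∧ q.1.1 ≤ k - 2 ∧ k - 2 ≤ p.1.1 + q.1.1
       then A (2 * k - 2 - p.1.1 - q.1.1)
     else 0) p.2 q.2

/-- `X₁` (leading coefficient of the first companion form `C₁(λ)`). -/
def C1X (k : ℕ) (A : ℕ → Mat n) : Matrix (Fin k × Fin n) (Fin k × Fin n) ℂ :=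
  Matrix.of fun p q =>
    (if p.1 = q.1 then (if p.1.1 = 0 then A k else (1 : Mat n)) else 0) p.2 q.2

/-- `Y₁` (trailing coefficient of the first companion form `C₁(λ)`). -/
def C1Y (k : ℕ) (A : ℕ → Mat n) : Matrix (Fin k × Fin n) (Fin k × Fin n) ℂ :=
  Matrix.of fun p q =>
    (if p.1.1 = 0 then -(A (k - 1 - q.1.1))
     else if p.1.1 = q.1.1 + 1 then (1 : Mat n) else 0) p.2 q.2



section Aux

variable {ι κ : Type*} [Fintype ι] [Fintype κ] [DecidableEq κ]

lemma specNorm_nonneg (M : Matrix ι κ ℂ) : 0 ≤ specNorm M := norm_nonneg _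

lemma toEuclideanLin_norm_le (M : Matrix ι κ ℂ) (x : EuclideanSpace ℂ κ) :
    ‖Matrix.toEuclideanLin M x‖ ≤ specNorm M * ‖x‖ := by
  have h := (LinearMap.toContinuousLinearMap (Matrix.toEuclideanLin M)).le_opNorm x
  simpa [specNorm] using h

lemma specNorm_smul (c : ℂ) (M : Matrix ι κ ℂ) :
    specNorm (c • M) = ‖c‖ * specNorm M := by
  rw [specNorm, specNorm, _root_.map_smul, _root_.map_smul]
  exact norm_smul c (LinearMap.toContinuousLinearMap (Matrix.toEuclideanLin M))

lemma specNorm_one_le : specNorm (1 : Mat n) ≤ 1 := by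
  rw [specNorm]
  refine ContinuousLinearMap.opNorm_le_bound _ zero_le_one ?_
  intro x
  simp [Matrix.toEuclideanLin_apply, Matrix.one_mulVec]

lemma specNorm_sum_le {α : Type*} (s : Finset α) (f : α → Matrix ι κ ℂ) :
    specNorm (∑ i ∈ s, f i) ≤ ∑ i ∈ s, specNorm (f i) := by
  simp only [specNorm, map_sum]
  exact norm_sum_le _ _

lemma normsq_blocks {k : ℕ} (M : Matrix (Fin k × Fin n) (Fin n) ℂ)
    (x : EuclideanSpace ℂ (Fin n)) :
    ‖Matrix.toEuclideanLin M x‖ ^ 2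
      = ∑ q : Fin k, ‖Matrix.toEuclideanLin (Matrix.of fun a b => M (q, a) b) x‖ ^ 2 := by
  have hn : ∀ {ι' : Type} [Fintype ι'] (y : EuclideanSpace ℂ ι'), ‖y‖ ^ 2 = ∑ i, ‖y i‖ ^ 2 := by
    intro ι' _ y
    rw [EuclideanSpace.norm_eq, Real.sq_sqrt (by positivity)]
  rw [hn]
  rw [Fintype.sum_prod_type]
  refine Finset.sum_congr rfl fun q _ => ?_
  rw [hn]
  rfl

lemma specNorm_col_le {k : ℕ} (M : Matrix (Fin k × Fin n) (Fin n) ℂ) (c : Fin k → ℝ)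
    (hc : ∀ q, specNorm (Matrix.of fun a b => M (q, a) b) ≤ c q) :
    specNorm M ≤ Real.sqrt (∑ q, c q ^ 2) := by
  rw [specNorm]
  refine ContinuousLinearMap.opNorm_le_bound _ (Real.sqrt_nonneg _) ?_
  intro x
  simp only [LinearMap.coe_toContinuousLinearMap']
  have h1 : ‖Matrix.toEuclideanLin M x‖ ^ 2 ≤ (∑ q, c q ^ 2) * ‖x‖ ^ 2 := by
    rw [normsq_blocks]
    calc ∑ q : Fin k, ‖Matrix.toEuclideanLin (Matrix.of fun a b => M (q, a) b) x‖ ^ 2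
        ≤ ∑ q : Fin k, (c q * ‖x‖) ^ 2 := by
          refine Finset.sum_le_sum fun q _ => ?_
          have h2 := toEuclideanLin_norm_le (Matrix.of fun a b => M (q, a) b) x
          have h3 : ‖Matrix.toEuclideanLin (Matrix.of fun a b => M (q, a) b) x‖
              ≤ c q * ‖x‖ :=
            h2.trans (mul_le_mul_of_nonneg_right (hc q) (norm_nonneg _))
          exact pow_le_pow_left₀ (norm_nonneg _) h3 2
      _ = (∑ q, c q ^ 2) * ‖x‖ ^ 2 := by rw [Finset.sum_mul]; simp [mul_pow]
  have h4 := Real.sqrt_le_sqrt h1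
  rwa [Real.sqrt_sq (norm_nonneg _), Real.sqrt_mul (by positivity), Real.sqrt_sq (norm_nonneg _)]
    at h4

lemma one_le_maxA1 (k : ℕ) (A : ℕ → Mat n) : 1 ≤ maxA1 k A := by
  rw [maxA1]
  exact le_trans (le_max_left 1 (specNorm (A 0)))
    (Finset.le_sup' (fun i => max 1 (specNorm (A i))) (Finset.mem_range.mpr (Nat.succ_pos k)))

lemma specNorm_A_le (k : ℕ) (A : ℕ → Mat n) {i : ℕ} (hi : i ≤ k) :
    specNorm (A i) ≤ maxA1 k A := by
  rw [maxA1]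
  exact le_trans (le_max_right 1 (specNorm (A i)))
    (Finset.le_sup' (fun i => max 1 (specNorm (A i))) (Finset.mem_range.mpr (Nat.lt_succ_of_le hi)))

lemma specNorm_horner_le (k : ℕ) (A : ℕ → Mat n) (q : ℕ) (δ : ℂ) (hq : q ≤ k) :
    specNorm (horner k A q δ)
      ≤ (∑ s ∈ Finset.range (q + 1), ‖δ‖ ^ s) * maxA1 k A := by
  refine le_trans (specNorm_sum_le _ _) ?_
  rw [Finset.sum_mul]
  refine Finset.sum_le_sum fun s hs => ?_
  have hs' : s < q + 1 := Finset.mem_range.mp hs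
  rw [specNorm_smul, norm_pow]
  exact mul_le_mul_of_nonneg_left (specNorm_A_le k A (by omega)) (by positivity)

lemma sum_range_odd (f : ℕ → ℝ) (m : ℕ) :
    ∑ q ∈ Finset.range (2 * m + 1), f q
      = ∑ j ∈ Finset.range (m + 1), f (2 * j) + ∑ j ∈ Finset.range m, f (2 * j + 1) := by
  induction m with
  | zero => simp
  | succ m ih =>
    have e0 : 2 * (m + 1) + 1 = (2 * m + 1) + 1 + 1 := by ring
    rw [e0, Finset.sum_range_succ, Finset.sum_range_succ, ih]
    rw [Finset.sum_range_succ (fun j => f (2 * j)) (m + 1)]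
    rw [Finset.sum_range_succ (fun j => f (2 * j + 1)) m]
    have e1 : 2 * m + 1 + 1 = 2 * (m + 1) := by ring
    rw [e1]
    ring

/-- The scalar bound function. -/
def gAux (k : ℕ) (δ : ℂ) (q : ℕ) : ℝ :=
  if q % 2 = 0 then ‖δ‖ ^ (2 * ((k - 1 - q) / 2))
  else (q + 1 : ℝ) * ∑ s ∈ Finset.range (q + 1), ‖δ‖ ^ (2 * ((k - q) / 2) + 2 * s)

lemma gAux_nonneg (k : ℕ) (δ : ℂ) (q : ℕ) : 0 ≤ gAux k δ q := by
  rw [gAux]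
  split_ifs with h
  · positivity
  · positivity

/-- The per-block bound. -/
def cAux (n k : ℕ) (A : ℕ → Mat n) (δ : ℂ) (q : ℕ) : ℝ :=
  if q % 2 = 0 then ‖δ‖ ^ ((k - 1 - q) / 2)
  else ‖δ‖ ^ ((k - q) / 2)
    * ((∑ s ∈ Finset.range (q + 1), ‖δ‖ ^ s) * maxA1 k A)

lemma cAux_le (k : ℕ) (A : ℕ → Mat n) (δ : ℂ) (q : Fin k) :
    specNorm (Matrix.of fun a b => Delta k A δ (q, a) b) ≤ cAux n k A δ q.1 := by
  have hblk : (Matrix.of fun a b => Delta k A δ (q, a) b) = DeltaBlock k A δ q.1 := rfl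
  rw [hblk, DeltaBlock, cAux]
  split_ifs with h
  · rw [specNorm_smul, norm_pow]
    exact mul_le_of_le_one_right (by positivity) specNorm_one_le
  · rw [specNorm_smul, norm_pow]
    exact mul_le_mul_of_nonneg_left (specNorm_horner_le k A q.1 δ (le_of_lt q.2))
      (by positivity)

lemma cAux_sq_le (k : ℕ) (A : ℕ → Mat n) (δ : ℂ) (q : ℕ) :
    cAux n k A δ q ^ 2 ≤ gAux k δ q * maxA1 k A ^ 2 := by
  have hM1one : 1 ≤ maxA1 k A := one_le_maxA1 k A
  rw [cAux, gAux]
  split_ifs with h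
  · have e : (‖δ‖ ^ ((k - 1 - q) / 2)) ^ 2
        = ‖δ‖ ^ (2 * ((k - 1 - q) / 2)) := by
      rw [← pow_mul, Nat.mul_comm]
    rw [e]
    exact le_mul_of_one_le_right (by positivity) (one_le_pow₀ hM1one)
  · have hS := sq_sum_le_card_mul_sum_sq (s := Finset.range (q + 1))
      (f := fun s => ‖δ‖ ^ s)
    rw [Finset.card_range] at hS
    have e1 : (‖δ‖ ^ ((k - q) / 2)
          * ((∑ s ∈ Finset.range (q + 1), ‖δ‖ ^ s) * maxA1 k A)) ^ 2
        = (‖δ‖ ^ ((k - q) / 2)) ^ 2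
          * (∑ s ∈ Finset.range (q + 1), ‖δ‖ ^ s) ^ 2 * maxA1 k A ^ 2 := by
      ring
    have e2 : ((q + 1 : ℝ)
          * ∑ s ∈ Finset.range (q + 1), ‖δ‖ ^ (2 * ((k - q) / 2) + 2 * s))
        = (‖δ‖ ^ ((k - q) / 2)) ^ 2
          * ((q + 1 : ℝ) * ∑ s ∈ Finset.range (q + 1), (‖δ‖ ^ s) ^ 2) := by
      rw [Finset.mul_sum, Finset.mul_sum, Finset.mul_sum]
      refine Finset.sum_congr rfl fun s _ => ?_
      rw [show 2 * ((k - q) / 2) + 2 * s = (k - q) / 2 * 2 + s * 2 by ring, pow_add,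
        ← pow_mul, ← pow_mul]
      ring
    rw [e1, e2]
    refine mul_le_mul_of_nonneg_right ?_ (by positivity)
    refine mul_le_mul_of_nonneg_left ?_ (by positivity)
    calc (∑ s ∈ Finset.range (q + 1), ‖δ‖ ^ s) ^ 2
        ≤ ((q + 1 : ℕ) : ℝ) * ∑ s ∈ Finset.range (q + 1), (‖δ‖ ^ s) ^ 2 := hS
      _ = (q + 1 : ℝ) * ∑ s ∈ Finset.range (q + 1), (‖δ‖ ^ s) ^ 2 := by
          push_cast; ring

lemma d1_eq_sum {k m : ℕ} (hm : k = 2 * m + 1) (δ : ℂ) :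
    d1 k δ = ∑ q ∈ Finset.range k, gAux k δ q := by
  subst hm
  rw [d1, sum_range_odd]
  have hmk : (2 * m + 1 - 1) / 2 = m := by omega
  rw [hmk]
  congr 1
  · -- even part
    rw [← Finset.sum_range_reflect (fun r => ‖δ‖ ^ (2 * r)) (m + 1)]
    refine Finset.sum_congr rfl fun j hj => ?_
    rw [Finset.mem_range] at hj
    rw [gAux, if_pos (by omega)]
    congr 1
    omega
  · -- odd part
    rw [← Finset.Ico_add_one_right_eq_Icc, Finset.sum_Ico_eq_sum_range]
    simp only [Nat.add_sub_cancel]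
    rw [← Finset.sum_range_reflect (fun i =>
      ((2 * m + 1 : ℕ) - 2 * ((1 + i : ℕ) : ℝ) + 1)
        * ∑ s ∈ Finset.Icc (1 + i) (2 * m + 1 - (1 + i)), ‖δ‖ ^ (2 * s)) m]
    refine Finset.sum_congr rfl fun j hj => ?_
    rw [Finset.mem_range] at hj
    rw [gAux, if_neg (by omega)]
    have e3 : 1 + (m - 1 - j) = m - j := by omega
    rw [e3]
    have e4 : 2 * m + 1 - (m - j) = m + j + 1 := by omega
    rw [e4]
    have e5 : (((2 * m + 1 : ℕ) : ℝ) - 2 * ((m - j : ℕ) : ℝ) + 1) = ((2 * j + 1 : ℕ) + 1 : ℝ) := by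
      have h6 : ((m - j : ℕ) : ℝ) = (m : ℝ) - (j : ℝ) := by
        rw [Nat.cast_sub (by omega)]
      rw [h6]
      push_cast
      ring
    rw [e5]
    congr 1
    rw [← Finset.Ico_add_one_right_eq_Icc, Finset.sum_Ico_eq_sum_range]
    have e6 : m + j + 1 + 1 - (m - j) = 2 * j + 1 + 1 := by omega
    rw [e6]
    refine Finset.sum_congr rfl fun s hs => ?_
    congr 1
    omega

end Aux

theorem stmt_3 {n k : ℕ} (hk : Odd k) (hk3 : 3 ≤ k) (A : ℕ → Mat n) (hAk : A k ≠ 0)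
    (δ : ℂ) :
    specNorm (Delta k A δ) ≤ Real.sqrt (d1 k δ) * maxA1 k A := by
  obtain ⟨m, hm⟩ := hk
  have hm' : k = 2 * m + 1 := by omega
  have hM1one : 1 ≤ maxA1 k A := one_le_maxA1 k A
  have hM1nn : (0 : ℝ) ≤ maxA1 k A := by linarith
  have h1 : specNorm (Delta k A δ) ≤ Real.sqrt (∑ q : Fin k, cAux n k A δ q.1 ^ 2) :=
    specNorm_col_le _ _ (cAux_le k A δ)
  have hd1 : d1 k δ = ∑ q ∈ Finset.range k, gAux k δ q := d1_eq_sum hm' δ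
  have hd1nn : 0 ≤ d1 k δ := by
    rw [hd1]
    exact Finset.sum_nonneg fun q _ => gAux_nonneg k δ q
  have h2 : ∑ q : Fin k, cAux n k A δ q.1 ^ 2 ≤ d1 k δ * maxA1 k A ^ 2 := by
    calc ∑ q : Fin k, cAux n k A δ q.1 ^ 2
        ≤ ∑ q : Fin k, gAux k δ q.1 * maxA1 k A ^ 2 :=
          Finset.sum_le_sum fun q _ => cAux_sq_le k A δ q.1
      _ = (∑ q ∈ Finset.range k, gAux k δ q) * maxA1 k A ^ 2 := by
          rw [← Finset.sum_mul, Fin.sum_univ_eq_sum_range]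
      _ = d1 k δ * maxA1 k A ^ 2 := by rw [hd1]
  calc specNorm (Delta k A δ) ≤ Real.sqrt (∑ q : Fin k, cAux n k A δ q.1 ^ 2) := h1
    _ ≤ Real.sqrt (d1 k δ * maxA1 k A ^ 2) := Real.sqrt_le_sqrt h2
    _ = Real.sqrt (d1 k δ) * maxA1 k A := by
        rw [Real.sqrt_mul hd1nn, Real.sqrt_sq hM1nn]

end MPoly
end
end

section
/- Let P(λ) = ∑_{i=0}^{k} A_i λ^i be an n×n complex matrix polynomial of odd degree k ≥ 3. Then for every λ ∈ ℂ: 𝒯_P(λ) · Δ(λ) = (e_k ⊗ I_n) · P(λ) and Δᴮ(λ) · 𝒯_P(λ) = P(λ) · (e_k ⊗ I_n)ᵀ, where e_k ⊗ I_n is the kn×n matrix whose last n×n block is I_n and whose remaining blocks are zero. -/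
open Finset Matrix

noncomputable section
namespace MPoly

variable {n : ℕ}

/-- Block of the pencil `𝒯_P(λ)`. -/
def TpBlock (k : ℕ) (A : ℕ → Mat n) (lam : ℂ) (i j : ℕ) : Mat n :=
  lam • T1Block k A i j - T0Block k A i j

lemma TpBlock_cases (k : ℕ) (A : ℕ → Mat n) (lam : ℂ) (i j : ℕ) :
    TpBlock k A lam i j =
      if i = j then (if i % 2 = 0 then lam • A (k - i) + A (k - i - 1) else 0)
      else if (j = i + 1 ∧ i % 2 = 1) ∨ (i = j + 1 ∧ j % 2 = 1) then lam • 1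
      else if (j = i + 1 ∧ i % 2 = 0) ∨ (i = j + 1 ∧ j % 2 = 0) then -1
      else 0 := by
  unfold TpBlock T1Block T0Block
  split_ifs <;>
    first
      | (exfalso; omega)
      | simp [sub_neg_eq_add]
      | simp

lemma TpBlock_symm (k : ℕ) (A : ℕ → Mat n) (lam : ℂ) (i j : ℕ) :
    TpBlock k A lam i j = TpBlock k A lam j i := by
  rw [TpBlock_cases, TpBlock_cases]
  split_ifs <;> first | rfl | (exfalso; omega) | (subst_vars; rfl)

lemma horner_succ (k q : ℕ) (A : ℕ → Mat n) (lam : ℂ) (h : q + 1 ≤ k) :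
    horner k A (q + 1) lam = lam • horner k A q lam + A (k - (q + 1)) := by
  unfold horner
  rw [Finset.sum_range_succ', Finset.smul_sum]
  congr 1
  · apply Finset.sum_congr rfl
    intro j _
    have h1 : k - (q + 1) + (j + 1) = k - q + j := by omega
    rw [h1, smul_smul, ← pow_succ']
  · simp

lemma DeltaBlock_even {k q : ℕ} (A : ℕ → Mat n) (lam : ℂ) (hq : q % 2 = 0) :
    DeltaBlock k A lam q = lam ^ ((k - 1 - q) / 2) • 1 := by
  unfold DeltaBlock
  rw [if_pos hq]

lemma DeltaBlock_odd {k q : ℕ} (A : ℕ → Mat n) (lam : ℂ) (hq : q % 2 = 1) :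
    DeltaBlock k A lam q = lam ^ ((k - q) / 2) • horner k A q lam := by
  unfold DeltaBlock
  rw [if_neg (by omega)]
lemma sum_two {M : Type*} [AddCommMonoid M] {k a b : ℕ} (ha : a < k) (hb : b < k)
    (X Y : M) :
    ∑ q ∈ Finset.range k, ((if q = a then X else 0) + (if q = b then Y else 0)) = X + Y := by
  rw [Finset.sum_add_distrib, Finset.sum_ite_eq', Finset.sum_ite_eq']
  simp [Finset.mem_range, ha, hb]

lemma sum_three {M : Type*} [AddCommMonoid M] {k a b c : ℕ} (ha : a < k) (hb : b < k)
    (hc : c < k) (X Y Z : M) :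
    ∑ q ∈ Finset.range k, ((if q = a then X else 0) + (if q = b then Y else 0)
      + (if q = c then Z else 0)) = X + Y + Z := by
  rw [Finset.sum_add_distrib, Finset.sum_add_distrib, Finset.sum_ite_eq', Finset.sum_ite_eq',
    Finset.sum_ite_eq']
  simp [Finset.mem_range, ha, hb, hc]

lemma peval_eq (k : ℕ) (hk2 : 2 ≤ k) (A : ℕ → Mat n) (lam : ℂ) :
    Peval k A lam = lam • (lam • horner k A (k - 2) lam) + (lam • A 1 + A 0) := by
  obtain ⟨m, rfl⟩ : ∃ m, k = m + 2 := ⟨k - 2, by omega⟩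
  unfold Peval horner
  rw [show m + 2 - 2 = m from by omega, show m + 2 - m = 2 from by omega]
  rw [Finset.sum_range_succ', Finset.sum_range_succ']
  rw [Finset.smul_sum, Finset.smul_sum, add_assoc]
  congr 1
  · apply Finset.sum_congr rfl
    intro j _
    have hj : j + 1 + 1 = 2 + j := by omega
    rw [hj, smul_smul, smul_smul]
    congr 1
    ring
  · simp
lemma key1 {k : ℕ} (hk : k % 2 = 1) (hk3 : 3 ≤ k) (A : ℕ → Mat n) (lam : ℂ)
    (i : ℕ) (hi : i < k) :
    ∑ q ∈ Finset.range k, TpBlock k A lam i q * DeltaBlock k A lam q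
      = if i = k - 1 then Peval k A lam else 0 := by
  rcases Nat.mod_two_eq_zero_or_one i with hie | hio
  · -- i even
    rcases eq_or_ne i 0 with rfl | hi0
    · -- i = 0
      rw [if_neg (by omega)]
      have hpt : ∀ q ∈ Finset.range k,
          TpBlock k A lam 0 q * DeltaBlock k A lam q
            = (if q = 0 then (lam • A k + A (k - 1)) * (lam ^ ((k - 1) / 2) • 1) else 0)
              + (if q = 1 then (-1 : Mat n) * (lam ^ ((k - 1) / 2) • horner k A 1 lam) else 0) := by
        intro q hq
        rw [Finset.mem_range] at hq
        rcases eq_or_ne q 0 with rfl | h0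
        · have hT : TpBlock k A lam 0 0 = lam • A (k - 0) + A (k - 0 - 1) := by
            rw [TpBlock_cases, if_pos rfl, if_pos (by omega)]
          rw [hT, DeltaBlock_even A lam (by omega), if_pos rfl, if_neg (by omega), add_zero]
          norm_num
        · rcases eq_or_ne q 1 with rfl | h1
          · have hT : TpBlock k A lam 0 1 = -1 := by
              rw [TpBlock_cases, if_neg (by omega), if_neg (by omega), if_pos (by omega)]
            rw [hT, DeltaBlock_odd A lam (by norm_num : (1:ℕ) % 2 = 1), if_neg (by omega),
              if_pos rfl, zero_add]
          · have hz : TpBlock k A lam 0 q = 0 := by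
              rw [TpBlock_cases]
              split_ifs <;> first | rfl | ((exfalso; simp_all) <;> omega)
            rw [hz, zero_mul, if_neg h0, if_neg h1, add_zero]
      rw [Finset.sum_congr rfl hpt, sum_two (by omega) (by omega)]
      have hh1 : horner k A 1 lam = A (k - 1) + lam • A k := by
        unfold horner
        rw [Finset.sum_range_succ, Finset.sum_range_one,
          Nat.sub_add_cancel (by omega : 1 ≤ k)]
        simp
      rw [hh1]
      simp only [mul_smul_comm, mul_one, neg_one_mul]
      module
    · rcases eq_or_ne i (k - 1) with rfl | hik
      · -- i = k - 1
        rw [if_pos rfl]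
        have hpt : ∀ q ∈ Finset.range k,
            TpBlock k A lam (k - 1) q * DeltaBlock k A lam q
              = (if q = k - 2 then
                  (lam • (1 : Mat n)) * (lam ^ ((k - (k - 2)) / 2) • horner k A (k - 2) lam) else 0)
                + (if q = k - 1 then
                    (lam • A (k - (k - 1)) + A (k - (k - 1) - 1))
                      * (lam ^ ((k - 1 - (k - 1)) / 2) • 1) else 0) := by
          intro q hq
          rw [Finset.mem_range] at hq
          rcases eq_or_ne q (k - 2) with rfl | h0
          · have hT : TpBlock k A lam (k - 1) (k - 2) = lam • 1 := by
              rw [TpBlock_cases, if_neg (by omega), if_pos (by omega)]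
            rw [hT, DeltaBlock_odd A lam (by omega), if_pos rfl, if_neg (by omega), add_zero]
          · rcases eq_or_ne q (k - 1) with rfl | h1
            · have hT : TpBlock k A lam (k - 1) (k - 1)
                  = lam • A (k - (k - 1)) + A (k - (k - 1) - 1) := by
                rw [TpBlock_cases, if_pos rfl, if_pos (by omega)]
              rw [hT, DeltaBlock_even A lam (by omega), if_neg (by omega), if_pos rfl, zero_add]
            · have hz : TpBlock k A lam (k - 1) q = 0 := by
                rw [TpBlock_cases]
                split_ifs <;> first | rfl | ((exfalso; simp_all) <;> omega)
              rw [hz, zero_mul, if_neg h0, if_neg h1, add_zero]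
        rw [Finset.sum_congr rfl hpt, sum_two (by omega) (by omega)]
        rw [show k - (k - 2) = 2 from by omega, show k - (k - 1) = 1 from by omega,
          show k - 1 - (k - 1) = 0 from by omega]
        rw [peval_eq k (by omega) A lam]
        norm_num [smul_mul_assoc, one_mul, mul_one]
      · -- 0 < i < k - 1, i even
        obtain ⟨j, rfl⟩ : ∃ j, i = j + 1 := ⟨i - 1, by omega⟩
        rw [if_neg hik]
        have hj2 : j % 2 = 1 := by omega
        have hpt : ∀ q ∈ Finset.range k,
            TpBlock k A lam (j + 1) q * DeltaBlock k A lam q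
              = (if q = j then
                  (lam • (1 : Mat n)) * (lam ^ ((k - j) / 2) • horner k A j lam) else 0)
                + (if q = j + 1 then
                    (lam • A (k - (j + 1)) + A (k - (j + 1) - 1))
                      * (lam ^ ((k - 1 - (j + 1)) / 2) • 1) else 0)
                + (if q = j + 2 then
                    (-1 : Mat n) * (lam ^ ((k - (j + 2)) / 2) • horner k A (j + 2) lam) else 0) := by
          intro q hq
          rw [Finset.mem_range] at hq
          rcases eq_or_ne q j with rfl | h0
          · have hT : TpBlock k A lam (q + 1) q = lam • 1 := by
              rw [TpBlock_cases, if_neg (by omega), if_pos (by omega)]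
            rw [hT, DeltaBlock_odd A lam hj2, if_pos rfl, if_neg (by omega),
              if_neg (by omega), add_zero, add_zero]
          · rcases eq_or_ne q (j + 1) with rfl | h1
            · have hT : TpBlock k A lam (j + 1) (j + 1)
                  = lam • A (k - (j + 1)) + A (k - (j + 1) - 1) := by
                rw [TpBlock_cases, if_pos rfl, if_pos (by omega)]
              rw [hT, DeltaBlock_even A lam (by omega), if_neg (by omega), if_pos rfl,
                if_neg (by omega), zero_add, add_zero]
            · rcases eq_or_ne q (j + 2) with rfl | h2
              · have hT : TpBlock k A lam (j + 1) (j + 2) = -1 := by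
                  rw [TpBlock_cases, if_neg (by omega), if_neg (by omega), if_pos (by omega)]
                rw [hT, DeltaBlock_odd A lam (by omega), if_neg (by omega), if_neg (by omega),
                  if_pos rfl, zero_add, zero_add]
              · have hz : TpBlock k A lam (j + 1) q = 0 := by
                  rw [TpBlock_cases]
                  split_ifs <;> first | rfl | ((exfalso; simp_all) <;> omega)
                rw [hz, zero_mul, if_neg h0, if_neg h1, if_neg h2, add_zero, add_zero]
        rw [Finset.sum_congr rfl hpt, sum_three (by omega) (by omega) (by omega)]
        rw [horner_succ k (j + 1) A lam (by omega), horner_succ k j A lam (by omega)]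
        rw [show (k - j) / 2 = (k - 1 - (j + 1)) / 2 + 1 from by omega,
          show (k - (j + 2)) / 2 = (k - 1 - (j + 1)) / 2 from by omega,
          show k - (j + 2) = k - (j + 1) - 1 from by omega]
        simp only [smul_mul_assoc, one_mul, mul_smul_comm, mul_one, neg_one_mul, pow_succ]
        module
  · -- i odd
    obtain ⟨j, rfl⟩ : ∃ j, i = j + 1 := ⟨i - 1, by omega⟩
    have hj2 : j % 2 = 0 := by omega
    rw [if_neg (by omega)]
    have hpt : ∀ q ∈ Finset.range k,
        TpBlock k A lam (j + 1) q * DeltaBlock k A lam q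
          = (if q = j then (-1 : Mat n) * (lam ^ ((k - 1 - j) / 2) • 1) else 0)
            + (if q = j + 2 then
                (lam • (1 : Mat n)) * (lam ^ ((k - 1 - (j + 2)) / 2) • 1) else 0) := by
      intro q hq
      rw [Finset.mem_range] at hq
      rcases eq_or_ne q j with rfl | h0
      · have hT : TpBlock k A lam (q + 1) q = -1 := by
          rw [TpBlock_cases, if_neg (by omega), if_neg (by omega), if_pos (by omega)]
        rw [hT, DeltaBlock_even A lam hj2, if_pos rfl, if_neg (by omega), add_zero]
      · rcases eq_or_ne q (j + 2) with rfl | h1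
        · have hT : TpBlock k A lam (j + 1) (j + 2) = lam • 1 := by
            rw [TpBlock_cases, if_neg (by omega), if_pos (by omega)]
          rw [hT, DeltaBlock_even A lam (by omega), if_neg (by omega), if_pos rfl, zero_add]
        · have hz : TpBlock k A lam (j + 1) q = 0 := by
            rw [TpBlock_cases]
            split_ifs <;> first | rfl | ((exfalso; simp_all) <;> omega)
          rw [hz, zero_mul, if_neg h0, if_neg h1, add_zero]
    rw [Finset.sum_congr rfl hpt, sum_two (by omega) (by omega)]
    rw [show (k - 1 - j) / 2 = (k - 1 - (j + 2)) / 2 + 1 from by omega]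
    simp only [neg_one_mul, smul_mul_assoc, one_mul, pow_succ]
    module
lemma DeltaBlock_comm {k : ℕ} (A : ℕ → Mat n) (lam : ℂ) (q i : ℕ) :
    DeltaBlock k A lam q * TpBlock k A lam q i = TpBlock k A lam i q * DeltaBlock k A lam q := by
  rcases Nat.mod_two_eq_zero_or_one q with hq | hq
  · rw [DeltaBlock_even A lam hq, TpBlock_symm k A lam i q, smul_mul_assoc, one_mul,
      mul_smul_comm, mul_one]
  · rw [TpBlock_symm k A lam i q, TpBlock_cases]
    split_ifs <;>
      first
        | ((exfalso; simp_all) <;> omega)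
        | simp [mul_smul_comm, smul_mul_assoc]

lemma key2 {k : ℕ} (hk : k % 2 = 1) (hk3 : 3 ≤ k) (A : ℕ → Mat n) (lam : ℂ)
    (i : ℕ) (hi : i < k) :
    ∑ q ∈ Finset.range k, DeltaBlock k A lam q * TpBlock k A lam q i
      = if i = k - 1 then Peval k A lam else 0 := by
  rw [Finset.sum_congr rfl fun q _ => DeltaBlock_comm A lam q i]
  exact key1 hk hk3 A lam i hi

lemma mul_delta_entry {k : ℕ} (A : ℕ → Mat n) (lam : ℂ) (p : Fin k × Fin n) (b : Fin n) :
    (Tpencil k A lam * Delta k A lam) p b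
      = (∑ q ∈ Finset.range k, TpBlock k A lam p.1.1 q * DeltaBlock k A lam q) p.2 b := by
  rw [Matrix.sum_apply, Matrix.mul_apply, Fintype.sum_prod_type,
    ← Fin.sum_univ_eq_sum_range
      (fun q => (TpBlock k A lam p.1.1 q * DeltaBlock k A lam q) p.2 b) k]
  apply Finset.sum_congr rfl
  intro q _
  rw [Matrix.mul_apply]
  apply Finset.sum_congr rfl
  intro c _
  simp [Tpencil, TpBlock, TT1, TT0, Delta, DeltaBlock, Matrix.sub_apply, Matrix.smul_apply,
    smul_eq_mul]

lemma deltaB_mul_entry {k : ℕ} (A : ℕ → Mat n) (lam : ℂ) (a : Fin n) (x : Fin k × Fin n) :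
    (DeltaB k A lam * Tpencil k A lam) a x
      = (∑ q ∈ Finset.range k, DeltaBlock k A lam q * TpBlock k A lam q x.1.1) a x.2 := by
  rw [Matrix.sum_apply, Matrix.mul_apply, Fintype.sum_prod_type,
    ← Fin.sum_univ_eq_sum_range
      (fun q => (DeltaBlock k A lam q * TpBlock k A lam q x.1.1) a x.2) k]
  apply Finset.sum_congr rfl
  intro q _
  rw [Matrix.mul_apply]
  apply Finset.sum_congr rfl
  intro c _
  simp [Tpencil, TpBlock, TT1, TT0, DeltaB, DeltaBlock, Matrix.sub_apply, Matrix.smul_apply,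
    smul_eq_mul]
theorem stmt_5 {n k : ℕ} (hk : Odd k) (hk3 : 3 ≤ k) (A : ℕ → Mat n) (hAk : A k ≠ 0)
    (lam : ℂ) :
    Tpencil k A lam * Delta k A lam = ekI k n * Peval k A lam
    ∧ DeltaB k A lam * Tpencil k A lam = Peval k A lam * (ekI k n)ᵀ := by
  have hk2 : k % 2 = 1 := Nat.odd_iff.mp hk
  constructor
  · ext p b
    rw [mul_delta_entry A lam p b, key1 hk2 hk3 A lam p.1.1 p.1.isLt, Matrix.mul_apply]
    simp only [ekI, Matrix.of_apply, ite_and, ite_mul, one_mul, zero_mul]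
    by_cases hp : p.1.1 = k - 1
    · rw [if_pos hp]
      simp [hp, Finset.sum_ite_eq]
    · rw [if_neg hp]
      simp [hp]
  · ext a x
    rw [deltaB_mul_entry A lam a x, key2 hk2 hk3 A lam x.1.1 x.1.isLt, Matrix.mul_apply]
    simp only [ekI, Matrix.transpose_apply, Matrix.of_apply, ite_and, mul_ite, mul_one, mul_zero]
    by_cases hx : x.1.1 = k - 1
    · rw [if_pos hx]
      simp [hx, Finset.sum_ite_eq]
    · rw [if_neg hx]
      simp [hx]

end MPoly
end
end

section
/- Let P(λ) = ∑_{i=0}^{k} A_i λ^i be a regular n×n complex matrix polynomial of odd degree k ≥ 3 and let δ ∈ ℂ be a finite eigenvalue of P (i.e. det P(δ) = 0). Then: (i) a vector z ∈ ℂ^{kn} is a right eigenvector of 𝒯_P associated with δ (i.e. z ≠ 0 and 𝒯_P(δ)z = 0) if and only if z = Δ(δ)x for some right eigenvector x of P associated with δ; (ii) z ∈ ℂ^{kn} is a left eigenvector of 𝒯_P associated with δ (i.e. z ≠ 0 and z*𝒯_P(δ) = 0) if and only if z = (Δᴮ(δ))* y for some left eigenvector y of P associated with δ. -/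
open Finset Matrix

noncomputable section
namespace MPoly

variable {n : ℕ}

/-! ### Auxiliary machinery for stmt_6 -/

/-- Block extraction of a vector in `ℂ^{kn}`. -/
def wz {k : ℕ} (z : Fin k × Fin n → ℂ) (j : ℕ) : Fin n → ℂ :=
  fun b => if h : j < k then z (⟨j, h⟩, b) else 0

/-- Blocks of the pencil `𝒯_P(λ)`. -/
def Tb (k : ℕ) (A : ℕ → Mat n) (δ : ℂ) (i j : ℕ) : Mat n :=
  δ • T1Block k A i j - T0Block k A i j

/-- `i`-th block row of `𝒯_P(δ)` applied to a block vector. -/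
def rowG (k : ℕ) (A : ℕ → Mat n) (δ : ℂ) (w : ℕ → Fin n → ℂ) (i : ℕ) : Fin n → ℂ :=
  (if 1 ≤ i then Tb k A δ i (i - 1) *ᵥ w (i - 1) else 0) + Tb k A δ i i *ᵥ w i
    + (if i + 1 < k then Tb k A δ i (i + 1) *ᵥ w (i + 1) else 0)

lemma sum_three_s6 {M : Type*} [AddCommMonoid M] (k i : ℕ) (hi : i < k) (F : ℕ → M)
    (hF : ∀ j, j < k → j + 1 ≠ i → j ≠ i → j ≠ i + 1 → F j = 0) :
    ∑ j ∈ Finset.range k, F j =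
      (if 1 ≤ i then F (i - 1) else 0) + F i + (if i + 1 < k then F (i + 1) else 0) := by
  have hsplit : ∀ j ∈ Finset.range k, F j =
      (if j + 1 = i then F j else 0) + (if j = i then F j else 0)
        + (if j = i + 1 then F j else 0) := by
    intro j hj
    simp only [Finset.mem_range] at hj
    by_cases h1 : j + 1 = i
    · have h2 : j ≠ i := by omega
      have h3 : j ≠ i + 1 := by omega
      simp [h1, h2, h3]
    · by_cases h2 : j = i
      · have h3 : j ≠ i + 1 := by omega
        simp [h1, h2, h3]
      · by_cases h3 : j = i + 1
        · subst h3
          rw [if_neg (by omega), if_neg (by omega), if_pos rfl]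
          simp
        · simp [h1, h2, h3, hF j hj h1 h2 h3]
  rw [Finset.sum_congr rfl hsplit, Finset.sum_add_distrib, Finset.sum_add_distrib]
  congr 2
  · by_cases hi1 : 1 ≤ i
    · have : ∀ j ∈ Finset.range k, (if j + 1 = i then F j else 0)
          = (if j = i - 1 then F j else 0) := by
        intro j _
        exact if_congr (by omega) rfl rfl
      rw [Finset.sum_congr rfl this, Finset.sum_ite_eq' (Finset.range k) (i - 1) F,
        if_pos (Finset.mem_range.mpr (by omega)), if_pos hi1]
    · have : ∀ j ∈ Finset.range k, (if j + 1 = i then F j else 0) = 0 := by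
        intro j _
        rw [if_neg (by omega)]
      rw [Finset.sum_congr rfl this, Finset.sum_const_zero, if_neg hi1]
  · rw [Finset.sum_ite_eq' (Finset.range k) i F, if_pos (Finset.mem_range.mpr hi)]
  · rw [Finset.sum_ite_eq' (Finset.range k) (i + 1) F]
    by_cases h : i + 1 < k
    · rw [if_pos (Finset.mem_range.mpr h), if_pos h]
    · rw [if_neg (by simpa [Finset.mem_range] using h), if_neg h]

lemma Tb_zero {k : ℕ} {A : ℕ → Mat n} {δ : ℂ} {i j : ℕ}
    (h1 : i ≠ j) (h2 : j ≠ i + 1) (h3 : i ≠ j + 1) : Tb k A δ i j = 0 := by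
  simp [Tb, T1Block, T0Block, h1, h2, h3]

lemma Tb_diag_even {k : ℕ} {A : ℕ → Mat n} {δ : ℂ} {i : ℕ} (h : i % 2 = 0) :
    Tb k A δ i i = δ • A (k - i) + A (k - i - 1) := by
  simp [Tb, T1Block, T0Block, h, sub_neg_eq_add]

lemma Tb_diag_odd {k : ℕ} {A : ℕ → Mat n} {δ : ℂ} {i : ℕ} (h : i % 2 = 1) :
    Tb k A δ i i = 0 := by
  simp [Tb, T1Block, T0Block, h]

lemma Tb_right_odd {k : ℕ} {A : ℕ → Mat n} {δ : ℂ} {i : ℕ} (h : i % 2 = 1) :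
    Tb k A δ i (i + 1) = δ • (1 : Mat n) := by
  have h1 : i ≠ i + 1 := by omega
  have h3 : i ≠ i + 1 + 1 := by omega
  simp [Tb, T1Block, T0Block, h, h1, h3]

lemma Tb_right_even {k : ℕ} {A : ℕ → Mat n} {δ : ℂ} {i : ℕ} (h : i % 2 = 0) :
    Tb k A δ i (i + 1) = -(1 : Mat n) := by
  have h1 : i ≠ i + 1 := by omega
  have h3 : i ≠ i + 1 + 1 := by omega
  have h4 : (i + 1) % 2 = 1 := by omega
  simp [Tb, T1Block, T0Block, h, h1, h3, h4]

lemma Tb_left_odd {k : ℕ} {A : ℕ → Mat n} {δ : ℂ} {j : ℕ} (h : j % 2 = 1) :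
    Tb k A δ (j + 1) j = δ • (1 : Mat n) := by
  have h1 : j + 1 ≠ j := by omega
  have h2 : j ≠ j + 1 + 1 := by omega
  simp [Tb, T1Block, T0Block, h, h1, h2]

lemma Tb_left_even {k : ℕ} {A : ℕ → Mat n} {δ : ℂ} {j : ℕ} (h : j % 2 = 0) :
    Tb k A δ (j + 1) j = -(1 : Mat n) := by
  have h1 : j + 1 ≠ j := by omega
  have h2 : j ≠ j + 1 + 1 := by omega
  have h4 : (j + 1) % 2 = 1 := by omega
  simp [Tb, T1Block, T0Block, h, h1, h2, h4]

lemma rowG_odd_eq {k : ℕ} {A : ℕ → Mat n} {δ : ℂ} (w : ℕ → Fin n → ℂ) (i : ℕ)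
    (h : i % 2 = 1) (hik : i + 1 < k) :
    rowG k A δ w i = -(w (i - 1)) + δ • w (i + 1) := by
  obtain ⟨j, rfl⟩ : ∃ j, i = j + 1 := ⟨i - 1, by omega⟩
  have hj : j % 2 = 0 := by omega
  rw [rowG, if_pos (by omega), if_pos hik, show j + 1 - 1 = j from rfl,
    Tb_left_even hj, Tb_diag_odd h, Tb_right_odd h]
  simp [Matrix.neg_mulVec, Matrix.one_mulVec, Matrix.zero_mulVec,
    Matrix.smul_mulVec]

lemma rowG_zero_eq {k : ℕ} {A : ℕ → Mat n} {δ : ℂ} (w : ℕ → Fin n → ℂ) (hk3 : 3 ≤ k) :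
    rowG k A δ w 0 = (δ • A k + A (k - 1)) *ᵥ w 0 - w 1 := by
  rw [rowG, if_neg (by omega), if_pos (by omega), Tb_diag_even (by norm_num),
    Tb_right_even (by norm_num)]
  simp [Matrix.neg_mulVec, Matrix.one_mulVec, sub_eq_add_neg]

lemma rowG_even_eq {k : ℕ} {A : ℕ → Mat n} {δ : ℂ} (w : ℕ → Fin n → ℂ) (i : ℕ)
    (h : i % 2 = 0) (h1 : 1 ≤ i) (hik : i + 1 < k) :
    rowG k A δ w i = δ • w (i - 1) + (δ • A (k - i) + A (k - i - 1)) *ᵥ w i - w (i + 1) := by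
  obtain ⟨j, rfl⟩ : ∃ j, i = j + 1 := ⟨i - 1, by omega⟩
  have hj : j % 2 = 1 := by omega
  rw [rowG, if_pos (by omega), if_pos hik, show j + 1 - 1 = j from rfl,
    Tb_left_odd hj, Tb_diag_even h, Tb_right_even h]
  simp [Matrix.neg_mulVec, Matrix.one_mulVec, Matrix.smul_mulVec, sub_eq_add_neg]

lemma rowG_last_eq {k : ℕ} {A : ℕ → Mat n} {δ : ℂ} (w : ℕ → Fin n → ℂ)
    (hk1 : k % 2 = 1) (hk3 : 3 ≤ k) :
    rowG k A δ w (k - 1) = δ • w (k - 2) + (δ • A 1 + A 0) *ᵥ w (k - 1) := by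
  have h : (k - 1) % 2 = 0 := by omega
  rw [rowG, if_pos (by omega), if_neg (by omega), show k - 1 - 1 = k - 2 from by omega,
    Tb_diag_even h, show k - (k - 1) = 1 from by omega, show 1 - 1 = 0 from rfl]
  have e1 : Tb k A δ (k - 1) (k - 2) = δ • (1 : Mat n) := by
    have := Tb_left_odd (k := k) (A := A) (δ := δ) (j := k - 2) (by omega)
    rwa [show k - 2 + 1 = k - 1 from by omega] at this
  rw [e1]
  simp [Matrix.smul_mulVec, Matrix.one_mulVec]

lemma rowG_congr {k : ℕ} {A : ℕ → Mat n} {δ : ℂ} (w w' : ℕ → Fin n → ℂ) (i : ℕ)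
    (h1 : 1 ≤ i → w (i - 1) = w' (i - 1)) (h2 : w i = w' i)
    (h3 : i + 1 < k → w (i + 1) = w' (i + 1)) :
    rowG k A δ w i = rowG k A δ w' i := by
  rw [rowG, rowG, h2]
  by_cases ha : 1 ≤ i <;> by_cases hb : i + 1 < k <;>
    simp only [if_pos, if_neg, ha, hb, if_true, if_false] <;>
    first
      | rw [h1 ha, h3 hb]
      | rw [h1 ha]
      | rw [h3 hb]

lemma DeltaBlock_mulVec_even {k : ℕ} {A : ℕ → Mat n} {δ : ℂ} {q : ℕ} (h : q % 2 = 0)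
    (x : Fin n → ℂ) :
    DeltaBlock k A δ q *ᵥ x = δ ^ ((k - 1 - q) / 2) • x := by
  rw [DeltaBlock, if_pos h, Matrix.smul_mulVec, Matrix.one_mulVec]

lemma DeltaBlock_mulVec_odd {k : ℕ} {A : ℕ → Mat n} {δ : ℂ} {q : ℕ} (h : q % 2 = 1)
    (x : Fin n → ℂ) :
    DeltaBlock k A δ q *ᵥ x = δ ^ ((k - q) / 2) • (horner k A q δ *ᵥ x) := by
  rw [DeltaBlock, if_neg (by omega), Matrix.smul_mulVec]

lemma horner_one {k : ℕ} {A : ℕ → Mat n} {δ : ℂ} (hk : 1 ≤ k) :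
    horner k A 1 δ = A (k - 1) + δ • A k := by
  rw [horner, Finset.sum_range_succ, Finset.sum_range_one,
    show k - 1 + 1 = k from by omega]
  simp

lemma horner_step {k i : ℕ} {A : ℕ → Mat n} {δ : ℂ} (h : i + 2 ≤ k) :
    horner k A (i + 2) δ = A (k - i - 2) + δ • A (k - i - 1) + δ ^ 2 • horner k A i δ := by
  rw [horner, horner, Finset.sum_range_succ', Finset.sum_range_succ', Finset.smul_sum]
  have e1 : ∀ j ∈ Finset.range (i + 1),
      δ ^ (j + 1 + 1) • A (k - (i + 2) + (j + 1 + 1))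
        = δ ^ 2 • (δ ^ j • A (k - i + j)) := by
    intro j _
    rw [smul_smul, ← pow_add, show 2 + j = j + 1 + 1 from by omega,
      show k - (i + 2) + (j + 1 + 1) = k - i + j from by omega]
  rw [Finset.sum_congr rfl e1, ← Finset.smul_sum,
    show k - (i + 2) + (0 + 1) = k - i - 1 from by omega,
    show k - (i + 2) + 0 = k - i - 2 from by omega]
  simp only [pow_zero, one_smul, zero_add, pow_one]
  abel

lemma horner_top {k : ℕ} {A : ℕ → Mat n} {δ : ℂ} :
    horner k A k δ = Peval k A δ := by
  rw [horner, Peval]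
  refine Finset.sum_congr rfl fun j _ => ?_
  rw [show k - k + j = j from by omega]

lemma Tpencil_entry {k : ℕ} (A : ℕ → Mat n) (δ : ℂ) (i j : Fin k) (a b : Fin n) :
    Tpencil k A δ (i, a) (j, b) = Tb k A δ i.1 j.1 a b := rfl

lemma wz_apply {k : ℕ} (z : Fin k × Fin n → ℂ) (j : Fin k) (b : Fin n) :
    wz z j.1 b = z (j, b) := by
  rw [wz]
  simp [j.2]

lemma Tmul_rows {k : ℕ} (A : ℕ → Mat n) (δ : ℂ) (z : Fin k × Fin n → ℂ) :
    Tpencil k A δ *ᵥ z = 0 ↔ ∀ i, i < k → rowG k A δ (wz z) i = 0 := by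
  have key : ∀ (i : Fin k) (a : Fin n),
      (Tpencil k A δ *ᵥ z) (i, a) = rowG k A δ (wz z) i.1 a := by
    intro i a
    have hsum : (Tpencil k A δ *ᵥ z) (i, a)
        = ∑ j ∈ Finset.range k, (Tb k A δ i.1 j *ᵥ wz z j) a := by
      rw [Matrix.mulVec, dotProduct,
        ← Fin.sum_univ_eq_sum_range (fun j => (Tb k A δ i.1 j *ᵥ wz z j) a) k,
        Fintype.sum_prod_type]
      refine Finset.sum_congr rfl fun j _ => ?_
      rw [Matrix.mulVec, dotProduct]
      refine Finset.sum_congr rfl fun b _ => ?_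
      rw [Tpencil_entry, wz_apply]
    rw [hsum, sum_three_s6 k i.1 i.2 (fun j => (Tb k A δ i.1 j *ᵥ wz z j) a)
      (fun j _ hj1 hj2 hj3 => by
        show (Tb k A δ i.1 j *ᵥ wz z j) a = 0
        rw [Tb_zero (fun h => hj2 h.symm) hj3 (fun h => hj1 h.symm),
          Matrix.zero_mulVec, Pi.zero_apply])]
    simp only [rowG, Pi.add_apply, apply_ite (fun v : Fin n → ℂ => v a), Pi.zero_apply]
  constructor
  · intro h i hi
    funext a
    have := congrFun h (⟨i, hi⟩, a)
    rw [key ⟨i, hi⟩ a] at this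
    exact this
  · intro h
    funext p
    obtain ⟨i, a⟩ := p
    rw [key i a, h i.1 i.2]
    rfl

/-- The candidate eigenvector blocks `Δ(δ)x`. -/
def Wx (k : ℕ) (A : ℕ → Mat n) (δ : ℂ) (x : Fin n → ℂ) (q : ℕ) : Fin n → ℂ :=
  DeltaBlock k A δ q *ᵥ x

lemma rowG_delta {k : ℕ} (hk1 : k % 2 = 1) (hk3 : 3 ≤ k) (A : ℕ → Mat n) (δ : ℂ)
    (x : Fin n → ℂ) (i : ℕ) (hi : i < k) :
    rowG k A δ (Wx k A δ x) i
      = if i = k - 1 then Peval k A δ *ᵥ x else 0 := by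
  by_cases hlast : i = k - 1
  · subst hlast
    rw [if_pos rfl, rowG_last_eq _ hk1 hk3]
    simp only [Wx]
    have h2 : DeltaBlock k A δ (k - 2) *ᵥ x = δ ^ 1 • (horner k A (k - 2) δ *ᵥ x) := by
      rw [DeltaBlock_mulVec_odd (by omega), show (k - (k - 2)) / 2 = 1 from by omega]
    have h1 : DeltaBlock k A δ (k - 1) *ᵥ x = x := by
      rw [DeltaBlock_mulVec_even (by omega), show (k - 1 - (k - 1)) / 2 = 0 from by omega,
        pow_zero, one_smul]
    have hh : Peval k A δ = A 0 + δ • A 1 + δ ^ 2 • horner k A (k - 2) δ := by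
      have := horner_step (k := k) (i := k - 2) (A := A) (δ := δ) (by omega)
      rw [show k - 2 + 2 = k from by omega, show k - (k - 2) - 2 = 0 from by omega,
        show k - (k - 2) - 1 = 1 from by omega, horner_top] at this
      exact this
    simp only [h1, h2, hh]
    simp only [Matrix.add_mulVec, Matrix.smul_mulVec, Matrix.mulVec_smul]
    module
  · rw [if_neg hlast]
    by_cases hpar : i % 2 = 1
    · have hik : i + 1 < k := by omega
      rw [rowG_odd_eq _ i hpar hik]
      simp only [Wx]
      rw [DeltaBlock_mulVec_even (q := i - 1) (by omega),
        DeltaBlock_mulVec_even (q := i + 1) (by omega),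
        show (k - 1 - (i - 1)) / 2 = (k - 1 - (i + 1)) / 2 + 1 from by omega]
      module
    · have hpar0 : i % 2 = 0 := by omega
      by_cases hi0 : i = 0
      · subst hi0
        rw [rowG_zero_eq _ hk3]
        simp only [Wx]
        rw [DeltaBlock_mulVec_even (q := 0) (by omega),
          DeltaBlock_mulVec_odd (q := 1) (by omega),
          show (k - 1) / 2 = (k - 1 - 0) / 2 from by omega, horner_one (by omega)]
        simp only [Matrix.add_mulVec, Matrix.smul_mulVec, Matrix.mulVec_smul]
        module
      · have h1i : 1 ≤ i := by omega
        have hik : i + 1 < k := by omega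
        rw [rowG_even_eq _ i hpar0 h1i hik]
        simp only [Wx]
        have hstep : horner k A (i + 1) δ
            = A (k - i - 1) + δ • A (k - i) + δ ^ 2 • horner k A (i - 1) δ := by
          have := horner_step (k := k) (i := i - 1) (A := A) (δ := δ) (by omega)
          rw [show i - 1 + 2 = i + 1 from by omega, show k - (i - 1) - 2 = k - i - 1 from by omega,
            show k - (i - 1) - 1 = k - i from by omega] at this
          exact this
        rw [DeltaBlock_mulVec_odd (q := i - 1) (by omega),
          DeltaBlock_mulVec_odd (q := i + 1) (by omega),
          DeltaBlock_mulVec_even (q := i) hpar0, hstep,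
          show (k - (i - 1)) / 2 = (k - (i + 1)) / 2 + 1 from by omega,
          show (k - 1 - i) / 2 = (k - (i + 1)) / 2 from by omega]
        simp only [Matrix.add_mulVec, Matrix.smul_mulVec, Matrix.mulVec_smul]
        module

lemma Delta_mulVec_apply {k : ℕ} (A : ℕ → Mat n) (δ : ℂ) (x : Fin n → ℂ)
    (q : Fin k) (a : Fin n) :
    (Delta k A δ *ᵥ x) (q, a) = (DeltaBlock k A δ q.1 *ᵥ x) a := rfl

lemma right_eig {k : ℕ} (hk1 : k % 2 = 1) (hk3 : 3 ≤ k) (A : ℕ → Mat n) (δ : ℂ)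
    (z : Fin k × Fin n → ℂ) :
    (z ≠ 0 ∧ Tpencil k A δ *ᵥ z = 0) ↔
      ∃ x : Fin n → ℂ, (x ≠ 0 ∧ Peval k A δ *ᵥ x = 0) ∧ z = Delta k A δ *ᵥ x := by
  constructor
  · rintro ⟨hz, hTz⟩
    rw [Tmul_rows] at hTz
    set w : ℕ → Fin n → ℂ := wz z with hwdef
    set x : Fin n → ℂ := w (k - 1) with hxdef
    -- even blocks, descending induction
    have hWlast : Wx k A δ x (k - 1) = x := by
      rw [Wx, DeltaBlock_mulVec_even (by omega),
        show (k - 1 - (k - 1)) / 2 = 0 from by omega, pow_zero, one_smul]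
    have heven : ∀ r, 2 * r ≤ k - 1 → w (k - 1 - 2 * r) = Wx k A δ x (k - 1 - 2 * r) := by
      intro r
      induction r with
      | zero =>
        intro _
        simpa using hWlast.symm
      | succ r ih =>
        intro hr
        have hodd : (k - 2 - 2 * r) % 2 = 1 := by omega
        have hik : (k - 2 - 2 * r) + 1 < k := by omega
        have hrow := hTz (k - 2 - 2 * r) (by omega)
        rw [rowG_odd_eq w _ hodd hik] at hrow
        have hd := rowG_delta hk1 hk3 A δ x (k - 2 - 2 * r) (by omega)
        rw [rowG_odd_eq _ _ hodd hik, if_neg (by omega)] at hd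
        have h1 := neg_add_eq_zero.mp hrow
        have h2 := neg_add_eq_zero.mp hd
        have ih' := ih (by omega)
        rw [show k - 1 - 2 * r = k - 2 - 2 * r + 1 from by omega] at ih'
        rw [show k - 1 - 2 * (r + 1) = k - 2 - 2 * r - 1 from by omega, h1, ih', ← h2]
    have heven' : ∀ q, q < k → q % 2 = 0 → w q = Wx k A δ x q := by
      intro q hq hq2
      have := heven ((k - 1 - q) / 2) (by omega)
      rwa [show k - 1 - 2 * ((k - 1 - q) / 2) = q from by omega] at this
    -- odd blocks, ascending induction
    have hodd1 : ∀ r, 2 * r + 1 ≤ k - 2 → w (2 * r + 1) = Wx k A δ x (2 * r + 1) := by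
      intro r
      induction r with
      | zero =>
        intro _
        have hrow := hTz 0 (by omega)
        rw [rowG_zero_eq w hk3] at hrow
        have hd := rowG_delta hk1 hk3 A δ x 0 (by omega)
        rw [rowG_zero_eq _ hk3, if_neg (by omega)] at hd
        have h1 := sub_eq_zero.mp hrow
        have h2 := sub_eq_zero.mp hd
        rw [show (2 * 0 + 1 : ℕ) = 1 from rfl, ← h1, ← h2, heven' 0 (by omega) (by omega)]
      | succ r ih =>
        intro hr
        have hrow := hTz (2 * r + 2) (by omega)
        rw [rowG_even_eq w _ (by omega) (by omega) (by omega),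
          show 2 * r + 2 - 1 = 2 * r + 1 from by omega] at hrow
        have hd := rowG_delta hk1 hk3 A δ x (2 * r + 2) (by omega)
        rw [rowG_even_eq _ _ (by omega) (by omega) (by omega),
          show 2 * r + 2 - 1 = 2 * r + 1 from by omega, if_neg (by omega)] at hd
        have h1 := sub_eq_zero.mp hrow
        have h2 := sub_eq_zero.mp hd
        have ih' := ih (by omega)
        rw [show 2 * (r + 1) + 1 = 2 * r + 2 + 1 from by omega, ← h1, ← h2, ih',
          heven' (2 * r + 2) (by omega) (by omega)]
    have hodd' : ∀ q, q < k → q % 2 = 1 → w q = Wx k A δ x q := by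
      intro q hq hq2
      have := hodd1 ((q - 1) / 2) (by omega)
      rwa [show 2 * ((q - 1) / 2) + 1 = q from by omega] at this
    have hblocks : ∀ q, q < k → w q = Wx k A δ x q := by
      intro q hq
      rcases Nat.even_or_odd q with h | h
      · exact heven' q hq (Nat.even_iff.mp h)
      · exact hodd' q hq (Nat.odd_iff.mp h)
    -- P(δ) x = 0
    have hPx : Peval k A δ *ᵥ x = 0 := by
      have hcong : rowG k A δ w (k - 1) = rowG k A δ (Wx k A δ x) (k - 1) :=
        rowG_congr _ _ _ (fun _ => hblocks (k - 1 - 1) (by omega))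
          (hblocks (k - 1) (by omega)) (fun h => absurd h (by omega))
      have hd := rowG_delta hk1 hk3 A δ x (k - 1) (by omega)
      rw [if_pos rfl] at hd
      rw [← hd, ← hcong]
      exact hTz (k - 1) (by omega)
    -- x ≠ 0
    have hxne : x ≠ 0 := by
      intro hx0
      apply hz
      funext p
      obtain ⟨q, a⟩ := p
      have : z (q, a) = w q.1 a := (wz_apply z q a).symm
      rw [this, hblocks q.1 q.2]
      show (DeltaBlock k A δ q.1 *ᵥ x) a = 0
      rw [hx0, Matrix.mulVec_zero]
      rfl
    refine ⟨x, ⟨hxne, hPx⟩, ?_⟩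
    funext p
    obtain ⟨q, a⟩ := p
    rw [Delta_mulVec_apply, ← wz_apply z q a]
    show w q.1 a = _
    rw [hblocks q.1 q.2]
    rfl
  · rintro ⟨x, ⟨hx, hPx⟩, rfl⟩
    have hwq : ∀ q, q < k → wz (Delta k A δ *ᵥ x) q = Wx k A δ x q := by
      intro q hq
      funext b
      have := wz_apply (Delta k A δ *ᵥ x) ⟨q, hq⟩ b
      rw [this, Delta_mulVec_apply]
      rfl
    constructor
    · intro h0
      apply hx
      funext a
      have h1 := congrFun h0 (⟨k - 1, by omega⟩, a)
      rw [Delta_mulVec_apply] at h1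
      simp only [Fin.val_mk] at h1
      rw [DeltaBlock_mulVec_even (by omega)] at h1
      rw [show (k - 1 - (k - 1)) / 2 = 0 from by omega, pow_zero, one_smul] at h1
      exact h1
    · rw [Tmul_rows]
      intro i hi
      have hcong : rowG k A δ (wz (Delta k A δ *ᵥ x)) i = rowG k A δ (Wx k A δ x) i :=
        rowG_congr _ _ _ (fun _ => hwq (i - 1) (by omega)) (hwq i hi) (fun h => hwq (i + 1) h)
      rw [hcong, rowG_delta hk1 hk3 A δ x i hi]
      split_ifs with h
      · exact hPx
      · rfl

lemma T1Block_transpose {k : ℕ} (A : ℕ → Mat n) (i j : ℕ) :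
    (T1Block k A i j)ᵀ = T1Block k (fun m => (A m)ᵀ) j i := by
  rw [T1Block, T1Block]
  by_cases h : i = j
  · subst h
    rw [if_pos rfl, if_pos rfl, apply_ite Matrix.transpose, Matrix.transpose_zero]
  · rw [if_neg h, if_neg (Ne.symm h), apply_ite Matrix.transpose,
      Matrix.transpose_one, Matrix.transpose_zero]
    exact if_congr or_comm rfl rfl

lemma T0Block_transpose {k : ℕ} (A : ℕ → Mat n) (i j : ℕ) :
    (T0Block k A i j)ᵀ = T0Block k (fun m => (A m)ᵀ) j i := by
  rw [T0Block, T0Block]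
  by_cases h : i = j
  · subst h
    rw [if_pos rfl, if_pos rfl, apply_ite Matrix.transpose, Matrix.transpose_zero,
      Matrix.transpose_neg]
  · rw [if_neg h, if_neg (Ne.symm h), apply_ite Matrix.transpose,
      Matrix.transpose_one, Matrix.transpose_zero]
    exact if_congr or_comm rfl rfl

lemma Tpencil_transpose {k : ℕ} (A : ℕ → Mat n) (δ : ℂ) :
    (Tpencil k A δ)ᵀ = Tpencil k (fun m => (A m)ᵀ) δ := by
  ext p q
  obtain ⟨i, a⟩ := p
  obtain ⟨j, b⟩ := q
  show Tpencil k A δ (j, b) (i, a) = Tpencil k (fun m => (A m)ᵀ) δ (i, a) (j, b)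
  rw [Tpencil_entry, Tpencil_entry]
  have h : (Tb k A δ j.1 i.1)ᵀ = Tb k (fun m => (A m)ᵀ) δ i.1 j.1 := by
    rw [Tb, Tb, Matrix.transpose_sub, Matrix.transpose_smul, T1Block_transpose,
      T0Block_transpose]
  rw [← h, Matrix.transpose_apply]

lemma Peval_transpose {k : ℕ} (A : ℕ → Mat n) (δ : ℂ) :
    (Peval k A δ)ᵀ = Peval k (fun m => (A m)ᵀ) δ := by
  rw [Peval, Peval, Matrix.transpose_sum]
  exact Finset.sum_congr rfl fun i _ => Matrix.transpose_smul _ _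

lemma horner_transpose {k q : ℕ} (A : ℕ → Mat n) (δ : ℂ) :
    (horner k A q δ)ᵀ = horner k (fun m => (A m)ᵀ) q δ := by
  rw [horner, horner, Matrix.transpose_sum]
  exact Finset.sum_congr rfl fun i _ => Matrix.transpose_smul _ _

lemma DeltaBlock_transpose {k q : ℕ} (A : ℕ → Mat n) (δ : ℂ) :
    (DeltaBlock k A δ q)ᵀ = DeltaBlock k (fun m => (A m)ᵀ) δ q := by
  rw [DeltaBlock, DeltaBlock, apply_ite Matrix.transpose]
  split_ifs with h
  · rw [Matrix.transpose_smul, Matrix.transpose_one]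
  · rw [Matrix.transpose_smul, horner_transpose]

lemma DeltaB_conjT_mulVec {k : ℕ} (A : ℕ → Mat n) (δ : ℂ) (x : Fin n → ℂ) :
    (DeltaB k A δ)ᴴ *ᵥ (star x) = star (Delta k (fun m => (A m)ᵀ) δ *ᵥ x) := by
  funext p
  obtain ⟨q, a⟩ := p
  show ∑ b, (DeltaB k A δ)ᴴ (q, a) b * star (x b)
    = star (∑ b, DeltaBlock k (fun m => (A m)ᵀ) δ q.1 a b * x b)
  rw [star_sum]
  refine Finset.sum_congr rfl fun b _ => ?_
  rw [star_mul', Matrix.conjTranspose_apply]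
  congr 1
  show star (DeltaBlock k A δ q.1 b a) = _
  congr 1
  rw [← DeltaBlock_transpose, Matrix.transpose_apply]

lemma left_eig {k : ℕ} (hk1 : k % 2 = 1) (hk3 : 3 ≤ k) (A : ℕ → Mat n) (δ : ℂ)
    (z : Fin k × Fin n → ℂ) :
    (z ≠ 0 ∧ Matrix.vecMul (star z) (Tpencil k A δ) = 0) ↔
      ∃ y : Fin n → ℂ, (y ≠ 0 ∧ Matrix.vecMul (star y) (Peval k A δ) = 0)
        ∧ z = (DeltaB k A δ)ᴴ *ᵥ y := by
  have hT : Tpencil k (fun m => (A m)ᵀ) δ *ᵥ (star z)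
      = Matrix.vecMul (star z) (Tpencil k A δ) := by
    rw [← Tpencil_transpose, Matrix.mulVec_transpose]
  have hmain := right_eig hk1 hk3 (fun m => (A m)ᵀ) δ (star z)
  constructor
  · rintro ⟨hz, hvz⟩
    have hz' : star z ≠ 0 := star_ne_zero.mpr hz
    obtain ⟨x, ⟨hx, hPx⟩, hzx⟩ := hmain.mp ⟨hz', by rw [hT]; exact hvz⟩
    refine ⟨star x, ⟨star_ne_zero.mpr hx, ?_⟩, ?_⟩
    · rw [star_star, ← Matrix.mulVec_transpose, Peval_transpose]
      exact hPx
    · rw [DeltaB_conjT_mulVec A δ x, ← hzx, star_star]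
  · rintro ⟨y, ⟨hy, hPy⟩, rfl⟩
    have hkey : (DeltaB k A δ)ᴴ *ᵥ y
        = star (Delta k (fun m => (A m)ᵀ) δ *ᵥ (star y)) := by
      conv_lhs => rw [show y = star (star y) from (star_star y).symm]
      rw [DeltaB_conjT_mulVec A δ (star y)]
    have hx : star y ≠ 0 := star_ne_zero.mpr hy
    have hPx : Peval k (fun m => (A m)ᵀ) δ *ᵥ (star y) = 0 := by
      rw [← Peval_transpose, Matrix.mulVec_transpose]
      exact hPy
    have h2 := hmain.mpr ⟨star y, ⟨hx, hPx⟩, by rw [hkey, star_star]⟩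
    refine ⟨fun h => h2.1 (by rw [h]; simp), by rw [hT] at h2; exact h2.2⟩

theorem stmt_6 {n k : ℕ} (hk : Odd k) (hk3 : 3 ≤ k) (A : ℕ → Mat n) (hAk : A k ≠ 0)
    (hreg : ∃ lam : ℂ, (Peval k A lam).det ≠ 0)
    (δ : ℂ) (hδ : (Peval k A δ).det = 0) :
    (∀ z : Fin k × Fin n → ℂ,
      (z ≠ 0 ∧ Tpencil k A δ *ᵥ z = 0)
        ↔ ∃ x : Fin n → ℂ, (x ≠ 0 ∧ Peval k A δ *ᵥ x = 0) ∧ z = Delta k A δ *ᵥ x)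
    ∧ (∀ z : Fin k × Fin n → ℂ,
      (z ≠ 0 ∧ Matrix.vecMul (star z) (Tpencil k A δ) = 0)
        ↔ ∃ y : Fin n → ℂ, (y ≠ 0 ∧ Matrix.vecMul (star y) (Peval k A δ) = 0)
            ∧ z = (DeltaB k A δ)ᴴ *ᵥ y) := by
  have hk1 : k % 2 = 1 := Nat.odd_iff.mp hk
  exact ⟨fun z => right_eig hk1 hk3 A δ z, fun z => left_eig hk1 hk3 A δ z⟩

end MPoly
end
end

section
/- Let P(λ) = ∑_{i=0}^{k} A_i λ^i be an n×n complex matrix polynomial of odd degree k ≥ 3 with A_0 ≠ 0. Then for every nonzero λ ∈ ℂ, 𝒯_P(λ) = λ · D R · 𝒯_{rev P}(1/λ) · R D. Moreover, for every nonzero δ ∈ ℂ: a vector z ∈ ℂ^{kn} is a right eigenvector of 𝒯_P associated with δ (i.e. z ≠ 0 and 𝒯_P(δ)z = 0) if and only if R D z is a right eigenvector of 𝒯_{rev P} associated with 1/δ, and z is a left eigenvector of 𝒯_P associated with δ (i.e. z ≠ 0 and z*𝒯_P(δ) = 0) if and only if R D z is a left eigenvector of 𝒯_{rev P} associated with 1/δ.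 -/
open Finset Matrix

noncomputable section
namespace MPoly

variable {n : ℕ}

variable {k : ℕ}

/-- flip map -/
def eflip (k n : ℕ) (p : Fin k × Fin n) : Fin k × Fin n := (p.1.rev, p.2)

lemma Dmat_eq_diagonal : Dmat k n = Matrix.diagonal (fun p : Fin k × Fin n => ((-1:ℂ)) ^ p.1.1) := by
  ext p q
  simp [Dmat, Matrix.diagonal_apply]

lemma Dmul_apply (M : Matrix (Fin k × Fin n) (Fin k × Fin n) ℂ) (p q : Fin k × Fin n) :
    (Dmat k n * M) p q = (-1:ℂ) ^ p.1.1 * M p q := by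
  rw [Dmat_eq_diagonal, Matrix.diagonal_mul]

lemma mulD_apply (M : Matrix (Fin k × Fin n) (Fin k × Fin n) ℂ) (p q : Fin k × Fin n) :
    (M * Dmat k n) p q = M p q * (-1:ℂ) ^ q.1.1 := by
  rw [Dmat_eq_diagonal, Matrix.mul_diagonal]

lemma Rmul_apply (M : Matrix (Fin k × Fin n) (Fin k × Fin n) ℂ) (p q : Fin k × Fin n) :
    (Rmat k n * M) p q = M (eflip k n p) q := by
  rw [Matrix.mul_apply]
  rw [Finset.sum_eq_single (eflip k n p)]
  · have h : (Rmat k n) p (eflip k n p) = 1 := by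
      have := p.1.isLt
      simp only [Rmat, Matrix.of_apply, eflip, Fin.val_rev]
      rw [if_pos ⟨by omega, trivial⟩]
    rw [h, one_mul]
  · intro r _ hr
    have h : (Rmat k n) p r = 0 := by
      simp only [Rmat, Matrix.of_apply]
      rw [if_neg]
      rintro ⟨h1, h2⟩
      apply hr
      have := p.1.isLt; have := r.1.isLt
      apply Prod.ext
      · apply Fin.ext; simp [eflip, Fin.val_rev]; omega
      · simp [eflip, h2.symm]
    rw [h, zero_mul]
  · intro h; exact absurd (Finset.mem_univ _) h

lemma mulR_apply (M : Matrix (Fin k × Fin n) (Fin k × Fin n) ℂ) (p q : Fin k × Fin n) :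
    (M * Rmat k n) p q = M p (eflip k n q) := by
  rw [Matrix.mul_apply]
  rw [Finset.sum_eq_single (eflip k n q)]
  · have h : (Rmat k n) (eflip k n q) q = 1 := by
      have := q.1.isLt
      simp only [Rmat, Matrix.of_apply, eflip, Fin.val_rev]
      rw [if_pos ⟨by omega, trivial⟩]
    rw [h, mul_one]
  · intro r _ hr
    have h : (Rmat k n) r q = 0 := by
      simp only [Rmat, Matrix.of_apply]
      rw [if_neg]
      rintro ⟨h1, h2⟩
      apply hr
      have := q.1.isLt; have := r.1.isLt
      apply Prod.ext
      · apply Fin.ext; simp [eflip, Fin.val_rev]; omega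
      · simp [eflip, h2]
    rw [h, mul_zero]
  · intro h; exact absurd (Finset.mem_univ _) h

lemma neg_one_pow_eq (i j : ℕ) (h : i % 2 = j % 2) : ((-1:ℂ))^i = (-1)^j := by
  rcases Nat.even_or_odd i with hi | hi
  · have hj : Even j := by rcases hi with ⟨t, ht⟩; exact ⟨j/2, by omega⟩
    rw [hi.neg_one_pow, hj.neg_one_pow]
  · have hj : Odd j := by rcases hi with ⟨t, ht⟩; exact ⟨j/2, by omega⟩
    rw [hi.neg_one_pow, hj.neg_one_pow]

lemma DR_comm (hk : Odd k) : Dmat k n * Rmat k n = Rmat k n * Dmat k n := by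
  ext p q
  rw [Dmul_apply, mulD_apply]
  by_cases h : p.1.1 + q.1.1 = k - 1 ∧ p.2 = q.2
  · have hval : (Rmat k n) p q = 1 := by simp [Rmat, h.1, h.2]
    rw [hval, mul_one, one_mul]
    apply neg_one_pow_eq
    rcases hk with ⟨m, hm⟩
    have := p.1.isLt; have := q.1.isLt
    omega
  · have hval : (Rmat k n) p q = 0 := by simp only [Rmat, Matrix.of_apply]; rw [if_neg h]
    rw [hval, mul_zero, zero_mul]

lemma DD_one : Dmat k n * Dmat k n = (1 : Matrix (Fin k × Fin n) (Fin k × Fin n) ℂ) := by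
  ext p q
  rw [Dmul_apply]
  simp only [Dmat, Matrix.of_apply, Matrix.one_apply]
  by_cases h : p = q
  · rw [if_pos h, if_pos h, ← pow_add, h]
    exact Even.neg_one_pow ⟨q.1.1, rfl⟩
  · rw [if_neg h, if_neg h, mul_zero]

lemma RR_one : Rmat k n * Rmat k n = (1 : Matrix (Fin k × Fin n) (Fin k × Fin n) ℂ) := by
  ext p q
  rw [Rmul_apply]
  simp only [Rmat, Matrix.of_apply, Matrix.one_apply, eflip, Fin.val_rev]
  have := p.1.isLt; have := q.1.isLt
  by_cases h : p = q
  · subst h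
    rw [if_pos ⟨by omega, rfl⟩, if_pos rfl]
  · rw [if_neg, if_neg h]
    rintro ⟨h1, h2⟩
    exact h (Prod.ext (Fin.ext (by omega)) h2)

lemma RDRD_one (hk : Odd k) :
    (Rmat k n * Dmat k n) * (Rmat k n * Dmat k n) = (1 : Matrix (Fin k × Fin n) (Fin k × Fin n) ℂ) := by
  calc (Rmat k n * Dmat k n) * (Rmat k n * Dmat k n)
      = Rmat k n * ((Dmat k n * Rmat k n) * Dmat k n) := by
        rw [Matrix.mul_assoc, Matrix.mul_assoc]
    _ = Rmat k n * ((Rmat k n * Dmat k n) * Dmat k n) := by rw [DR_comm hk]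
    _ = Rmat k n * (Rmat k n * (Dmat k n * Dmat k n)) := by rw [Matrix.mul_assoc]
    _ = 1 := by rw [DD_one, Matrix.mul_one, RR_one]

lemma Rconj : (Rmat k n)ᴴ = Rmat k n := by
  ext p q
  simp only [Matrix.conjTranspose_apply, Rmat, Matrix.of_apply]
  by_cases h : p.1.1 + q.1.1 = k - 1 ∧ p.2 = q.2
  · rw [if_pos ⟨by omega, h.2.symm⟩, if_pos h, star_one]
  · rw [if_neg, if_neg h, star_zero]
    rintro ⟨h1, h2⟩
    exact h ⟨by omega, h2.symm⟩

lemma Dconj : (Dmat k n)ᴴ = Dmat k n := by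
  ext p q
  simp only [Matrix.conjTranspose_apply, Dmat, Matrix.of_apply]
  by_cases h : p = q
  · rw [if_pos h.symm, if_pos h, h]
    simp
  · rw [if_neg (fun hh => h hh.symm), if_neg h, star_zero]

lemma RDconj (hk : Odd k) : (Rmat k n * Dmat k n)ᴴ = Rmat k n * Dmat k n := by
  rw [Matrix.conjTranspose_mul, Dconj, Rconj, DR_comm hk]

section blocks
variable (A : ℕ → Mat n) {i j : ℕ}

lemma T1_diag (i : ℕ) : T1Block k A i i = if i % 2 = 0 then A (k - i) else 0 := by
  simp [T1Block]

lemma T0_diag (i : ℕ) : T0Block k A i i = if i % 2 = 0 then -(A (k - i - 1)) else 0 := by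
  simp [T0Block]

lemma T1_off (hij : i ≠ j) :
    T1Block k A i j = if (j = i + 1 ∧ i % 2 = 1) ∨ (i = j + 1 ∧ j % 2 = 1) then 1 else 0 := by
  simp [T1Block, hij]

lemma T0_off (hij : i ≠ j) :
    T0Block k A i j = if (j = i + 1 ∧ i % 2 = 0) ∨ (i = j + 1 ∧ j % 2 = 0) then 1 else 0 := by
  simp [T0Block, hij]

/-- Key entrywise identity. -/
lemma key (hk : Odd k) {i j i' j' : ℕ} (hi : i < k) (hj : j < k)
    (hii' : i + i' = k - 1) (hjj' : j + j' = k - 1) (lam : ℂ) (a b : Fin n) :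
    lam * T1Block k A i j a b - T0Block k A i j a b
      = (-1:ℂ) ^ (i + j) * (T1Block k (fun t => A (k - t)) i' j' a b
          - lam * T0Block k (fun t => A (k - t)) i' j' a b) := by
  obtain ⟨m, hm⟩ := hk
  by_cases hij : i = j
  · subst hij
    have hij' : i' = j' := by omega
    subst hij'
    rw [T1_diag, T0_diag, T1_diag, T0_diag,
        (show ((-1:ℂ)) ^ (i + i) = 1 from Even.neg_one_pow ⟨i, rfl⟩), one_mul]
    by_cases hp : i % 2 = 0
    · rw [if_pos hp, if_pos hp, if_pos (show i' % 2 = 0 by omega),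
          if_pos (show i' % 2 = 0 by omega),
          show k - (k - i' - 1) = k - i from by omega,
          show k - (k - i') = k - i - 1 from by omega]
      simp only [Matrix.neg_apply]
      ring
    · rw [if_neg hp, if_neg hp, if_neg (show ¬ i' % 2 = 0 by omega),
          if_neg (show ¬ i' % 2 = 0 by omega)]
      simp
  · have hij' : i' ≠ j' := by omega
    rw [T1_off A hij, T0_off A hij, T1_off _ hij', T0_off _ hij']
    by_cases hc1 : j = i + 1
    · have hsign : ((-1:ℂ)) ^ (i + j) = -1 := Odd.neg_one_pow ⟨i, by omega⟩
      have hc1' : i' = j' + 1 := by omega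
      by_cases hp : i % 2 = 0
      · rw [if_neg (show ¬((j = i + 1 ∧ i % 2 = 1) ∨ (i = j + 1 ∧ j % 2 = 1)) by omega),
            if_pos (show (j = i + 1 ∧ i % 2 = 0) ∨ (i = j + 1 ∧ j % 2 = 0) from Or.inl ⟨hc1, hp⟩),
            if_pos (show (j' = i' + 1 ∧ i' % 2 = 1) ∨ (i' = j' + 1 ∧ j' % 2 = 1)
              from Or.inr ⟨hc1', by omega⟩),
            if_neg (show ¬((j' = i' + 1 ∧ i' % 2 = 0) ∨ (i' = j' + 1 ∧ j' % 2 = 0)) by omega),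
            hsign]
        simp only [Matrix.zero_apply]
        ring
      · rw [if_pos (show (j = i + 1 ∧ i % 2 = 1) ∨ (i = j + 1 ∧ j % 2 = 1)
              from Or.inl ⟨hc1, by omega⟩),
            if_neg (show ¬((j = i + 1 ∧ i % 2 = 0) ∨ (i = j + 1 ∧ j % 2 = 0)) by omega),
            if_neg (show ¬((j' = i' + 1 ∧ i' % 2 = 1) ∨ (i' = j' + 1 ∧ j' % 2 = 1)) by omega),
            if_pos (show (j' = i' + 1 ∧ i' % 2 = 0) ∨ (i' = j' + 1 ∧ j' % 2 = 0)
              from Or.inr ⟨hc1', by omega⟩),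
            hsign]
        simp only [Matrix.zero_apply]
        ring
    · by_cases hc2 : i = j + 1
      · have hsign : ((-1:ℂ)) ^ (i + j) = -1 := Odd.neg_one_pow ⟨j, by omega⟩
        have hc2' : j' = i' + 1 := by omega
        by_cases hp : j % 2 = 0
        · rw [if_neg (show ¬((j = i + 1 ∧ i % 2 = 1) ∨ (i = j + 1 ∧ j % 2 = 1)) by omega),
              if_pos (show (j = i + 1 ∧ i % 2 = 0) ∨ (i = j + 1 ∧ j % 2 = 0)
                from Or.inr ⟨hc2, hp⟩),
              if_pos (show (j' = i' + 1 ∧ i' % 2 = 1) ∨ (i' = j' + 1 ∧ j' % 2 = 1)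
                from Or.inl ⟨hc2', by omega⟩),
              if_neg (show ¬((j' = i' + 1 ∧ i' % 2 = 0) ∨ (i' = j' + 1 ∧ j' % 2 = 0)) by omega),
              hsign]
          simp only [Matrix.zero_apply]
          ring
        · rw [if_pos (show (j = i + 1 ∧ i % 2 = 1) ∨ (i = j + 1 ∧ j % 2 = 1)
                from Or.inr ⟨hc2, by omega⟩),
              if_neg (show ¬((j = i + 1 ∧ i % 2 = 0) ∨ (i = j + 1 ∧ j % 2 = 0)) by omega),
              if_neg (show ¬((j' = i' + 1 ∧ i' % 2 = 1) ∨ (i' = j' + 1 ∧ j' % 2 = 1)) by omega),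
              if_pos (show (j' = i' + 1 ∧ i' % 2 = 0) ∨ (i' = j' + 1 ∧ j' % 2 = 0)
                from Or.inl ⟨hc2', by omega⟩),
              hsign]
          simp only [Matrix.zero_apply]
          ring
      · rw [if_neg (show ¬((j = i + 1 ∧ i % 2 = 1) ∨ (i = j + 1 ∧ j % 2 = 1)) by omega),
            if_neg (show ¬((j = i + 1 ∧ i % 2 = 0) ∨ (i = j + 1 ∧ j % 2 = 0)) by omega),
            if_neg (show ¬((j' = i' + 1 ∧ i' % 2 = 1) ∨ (i' = j' + 1 ∧ j' % 2 = 1)) by omega),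
            if_neg (show ¬((j' = i' + 1 ∧ i' % 2 = 0) ∨ (i' = j' + 1 ∧ j' % 2 = 0)) by omega)]
        simp

end blocks

lemma pencil_id (hk : Odd k) (A : ℕ → Mat n) (lam : ℂ) (hlam : lam ≠ 0) :
    Tpencil k A lam
      = lam • (Dmat k n * Rmat k n * Tpencil k (fun i => A (k - i)) lam⁻¹
          * Rmat k n * Dmat k n) := by
  ext p q
  rw [Matrix.smul_apply, mulD_apply, mulR_apply, Matrix.mul_assoc, Dmul_apply, Rmul_apply]
  simp only [Tpencil, Matrix.sub_apply, Matrix.smul_apply, smul_eq_mul, TT1, TT0,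
    Matrix.of_apply, eflip, Fin.val_rev]
  have hp := p.1.isLt
  have hq := q.1.isLt
  rw [key A hk (i' := k - (1 + p.1.1)) (j' := k - (1 + q.1.1)) hp hq (by omega) (by omega) lam p.2 q.2, pow_add]
  field_simp
  ring

lemma vecMul_smul_mat {m : Type*} [Fintype m] (v : m → ℂ) (a : ℂ) (M : Matrix m m ℂ) :
    v ᵥ* (a • M) = a • (v ᵥ* M) := by
  funext j
  simp only [Matrix.vecMul, dotProduct, Matrix.smul_apply, smul_eq_mul, Pi.smul_apply,
    Finset.mul_sum]
  apply Finset.sum_congr rfl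
  intro i _
  ring

theorem stmt_9 {n k : ℕ} (hk : Odd k) (hk3 : 3 ≤ k) (A : ℕ → Mat n)
    (hAk : A k ≠ 0) (hA0 : A 0 ≠ 0) :
    (∀ lam : ℂ, lam ≠ 0 →
      Tpencil k A lam
        = lam • (Dmat k n * Rmat k n * Tpencil k (fun i => A (k - i)) lam⁻¹
            * Rmat k n * Dmat k n))
    ∧ (∀ δ : ℂ, δ ≠ 0 → ∀ z : Fin k × Fin n → ℂ,
        ((z ≠ 0 ∧ Tpencil k A δ *ᵥ z = 0)
          ↔ ((Rmat k n * Dmat k n) *ᵥ z ≠ 0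
              ∧ Tpencil k (fun i => A (k - i)) δ⁻¹ *ᵥ ((Rmat k n * Dmat k n) *ᵥ z) = 0))
        ∧ ((z ≠ 0 ∧ Matrix.vecMul (star z) (Tpencil k A δ) = 0)
          ↔ ((Rmat k n * Dmat k n) *ᵥ z ≠ 0
              ∧ Matrix.vecMul (star ((Rmat k n * Dmat k n) *ᵥ z))
                  (Tpencil k (fun i => A (k - i)) δ⁻¹) = 0))) := by
  refine ⟨fun lam hlam => pencil_id hk A lam hlam, fun δ hδ z => ?_⟩
  set B := Rmat k n * Dmat k n with hBdef
  have hBB : B * B = 1 := RDRD_one hk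
  have hBH : Bᴴ = B := RDconj hk
  set T := Tpencil k A δ with hTdef
  set T' := Tpencil k (fun i => A (k - i)) δ⁻¹ with hT'def
  -- T = δ • (B * T' * B)
  have hmain : T = δ • (B * T' * B) := by
    rw [hTdef, pencil_id hk A δ hδ]
    congr 1
    rw [DR_comm hk, Matrix.mul_assoc (Rmat k n * Dmat k n * T')]
  -- T' * B = δ⁻¹ • (B * T)
  have hT'B : T' * B = δ⁻¹ • (B * T) := by
    rw [hmain, Matrix.mul_smul, smul_smul, inv_mul_cancel₀ hδ, one_smul,
      ← Matrix.mul_assoc B (B * T') B, ← Matrix.mul_assoc B B T', hBB, Matrix.one_mul]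
  -- B * T' = δ⁻¹ • (T * B)
  have hBT' : B * T' = δ⁻¹ • (T * B) := by
    rw [hmain, Matrix.smul_mul, smul_smul, inv_mul_cancel₀ hδ, one_smul,
      Matrix.mul_assoc (B * T') B B, hBB, Matrix.mul_one]
  have hinj : ∀ w : Fin k × Fin n → ℂ, B *ᵥ w = 0 ↔ w = 0 := by
    intro w
    constructor
    · intro h
      have : (B * B) *ᵥ w = 0 := by rw [← Matrix.mulVec_mulVec, h, Matrix.mulVec_zero]
      rwa [hBB, Matrix.one_mulVec] at this
    · intro h; rw [h, Matrix.mulVec_zero]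
  have hinj' : ∀ w : Fin k × Fin n → ℂ, w ᵥ* B = 0 ↔ w = 0 := by
    intro w
    constructor
    · intro h
      have : w ᵥ* (B * B) = 0 := by rw [← Matrix.vecMul_vecMul, h, Matrix.zero_vecMul]
      rwa [hBB, Matrix.vecMul_one] at this
    · intro h; rw [h, Matrix.zero_vecMul]
  constructor
  · -- right eigenvectors
    have hval : T' *ᵥ (B *ᵥ z) = δ⁻¹ • (B *ᵥ (T *ᵥ z)) := by
      rw [Matrix.mulVec_mulVec, hT'B, Matrix.smul_mulVec, Matrix.mulVec_mulVec]
    constructor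
    · rintro ⟨hz, hTz⟩
      refine ⟨fun h => hz ((hinj z).mp h), ?_⟩
      rw [hval, hTz, Matrix.mulVec_zero, smul_zero]
    · rintro ⟨hz, hTz⟩
      have hz0 : z ≠ 0 := fun h => hz (by rw [h, Matrix.mulVec_zero])
      refine ⟨hz0, ?_⟩
      rw [hval, smul_eq_zero] at hTz
      rcases hTz with h | h
      · exact absurd h (inv_ne_zero hδ)
      · exact (hinj _).mp h
  · -- left eigenvectors
    have hval : Matrix.vecMul (star (B *ᵥ z)) T' = δ⁻¹ • ((Matrix.vecMul (star z) T) ᵥ* B) := by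
      rw [Matrix.star_mulVec, hBH, Matrix.vecMul_vecMul, hBT', vecMul_smul_mat,
        ← Matrix.vecMul_vecMul]
    constructor
    · rintro ⟨hz, hTz⟩
      refine ⟨fun h => hz ((hinj z).mp h), ?_⟩
      rw [hval, hTz, Matrix.zero_vecMul, smul_zero]
    · rintro ⟨hz, hTz⟩
      have hz0 : z ≠ 0 := fun h => hz (by rw [h, Matrix.mulVec_zero])
      refine ⟨hz0, ?_⟩
      rw [hval, smul_eq_zero] at hTz
      rcases hTz with h | h
      · exact absurd h (inv_ne_zero hδ)
      · exact (hinj' _).mp h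

end MPoly
end
end

section
/- Let P(λ) = ∑_{i=0}^{k} A_i λ^i be an n×n complex matrix polynomial of odd degree k ≥ 3, let δ ∈ ℂ, let x₁ ∈ ℂ^n satisfy x₁*P(δ) = 0 and let x₂ ∈ ℂ^n satisfy P(δ)x₂ = 0. Write 𝒯_P(λ) = λ𝒯₁ − 𝒯₀ and set z₁ := (Δᴮ(δ))* x₁ and z₂ := Δ(δ) x₂. Then z₁* 𝒯₁ z₂ = x₁* P′(δ) x₂, where P′(λ) = ∑_{i=1}^{k} i A_i λ^{i−1} is the derivative of P. -/
open Finset Matrix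

noncomputable section
namespace MPoly

variable {n : ℕ}

section Aux

private lemma split_parity' {M : Type*} [AddCommMonoid M] (g : ℕ → M) (m : ℕ) :
    ∑ q ∈ Finset.range (2*m+1), g q
      = ∑ j ∈ Finset.range (m+1), g (2*j) + ∑ j ∈ Finset.range m, g (2*j+1) := by
  induction m with
  | zero => simp
  | succ m ih =>
    have h : 2*(m+1)+1 = (2*m+1) + 1 + 1 := by ring
    rw [h, sum_range_succ, sum_range_succ, ih, sum_range_succ (fun j => g (2*j)) (m+1),
      sum_range_succ (fun j => g (2*j+1)) m]
    have e1 : 2*m+1+1 = 2*(m+1) := by ring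
    rw [e1]; abel

private lemma key_sum {M : Type*} [AddCommGroup M] [Module ℂ M] (δ : ℂ) (B : ℕ → M) (m : ℕ) :
    (∑ j ∈ Finset.range (m+1), δ^(2*j) • B (2*j+1))
      + ∑ j ∈ Finset.range m, (2:ℂ) • ∑ t ∈ Finset.range (2*m-2*j), δ^(2*j+1+t) • B (2*j+2+t)
    = ∑ u ∈ Finset.range (2*m+1), (((u:ℂ)+1) * δ^u) • B (u+1) := by
  induction m with
  | zero => simp
  | succ m ih =>
    have hstep : ∀ j ∈ Finset.range m,
        (2:ℂ) • ∑ t ∈ Finset.range (2*(m+1)-2*j), δ^(2*j+1+t) • B (2*j+2+t)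
        = ((2:ℂ) • ∑ t ∈ Finset.range (2*m-2*j), δ^(2*j+1+t) • B (2*j+2+t))
          + ((2:ℂ) • (δ^(2*m+1) • B (2*m+2)) + (2:ℂ) • (δ^(2*m+2) • B (2*m+3))) := by
      intro j hj
      rw [Finset.mem_range] at hj
      have h1 : 2*(m+1)-2*j = (2*m-2*j) + 1 + 1 := by omega
      rw [h1, sum_range_succ, sum_range_succ]
      have e1 : 2*j+1+(2*m-2*j) = 2*m+1 := by omega
      have e2 : 2*j+2+(2*m-2*j) = 2*m+2 := by omega
      have e3 : 2*j+1+(2*m-2*j+1) = 2*m+2 := by omega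
      have e4 : 2*j+2+(2*m-2*j+1) = 2*m+3 := by omega
      rw [e1, e2, e3, e4, smul_add, smul_add]
      abel
    rw [sum_range_succ (fun j => δ^(2*j) • B (2*j+1)) (m+1),
        sum_range_succ
          (fun j => (2:ℂ) • ∑ t ∈ Finset.range (2*(m+1)-2*j), δ^(2*j+1+t) • B (2*j+2+t)) m,
        Finset.sum_congr rfl hstep, Finset.sum_add_distrib, Finset.sum_const]
    have hlast : ∑ t ∈ Finset.range (2*(m+1)-2*m), δ^(2*m+1+t) • B (2*m+2+t)
        = δ^(2*m+1) • B (2*m+2) + δ^(2*m+2) • B (2*m+3) := by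
      have h2 : 2*(m+1)-2*m = 2 := by omega
      rw [h2, sum_range_succ, sum_range_succ, sum_range_zero, zero_add]
    rw [hlast, card_range]
    have hrhs : (2*(m+1)+1) = (2*m+1) + 1 + 1 := by omega
    conv_rhs => rw [hrhs, sum_range_succ, sum_range_succ]
    rw [← ih]
    simp only [show 2*(m+1)+1 = 2*m+3 from by omega, show 2*(m+1) = 2*m+2 from by omega,
      show 2*m+2+1 = 2*m+3 from by omega, show 2*m+1+1 = 2*m+2 from by omega]
    rw [← Nat.cast_smul_eq_nsmul ℂ m]
    push_cast
    module

private lemma blockMul {n k : ℕ} (Bf Cf : Fin k → Mat n) (T : Fin k → Fin k → Mat n) :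
    (Matrix.of fun (a : Fin n) (q : Fin k × Fin n) => Bf q.1 a q.2) *
      ((Matrix.of fun (p q : Fin k × Fin n) => T p.1 q.1 p.2 q.2) *
       (Matrix.of fun (p : Fin k × Fin n) (b : Fin n) => Cf p.1 p.2 b))
    = ∑ q : Fin k, ∑ p : Fin k, Bf q * T q p * Cf p := by
  ext a b
  simp only [Matrix.mul_apply, Matrix.of_apply, Matrix.sum_apply, Fintype.sum_prod_type,
    Finset.sum_mul, Finset.mul_sum, mul_assoc]
  refine Finset.sum_congr rfl fun q _ => ?_
  rw [Finset.sum_comm]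

private lemma T1Block_split {n k : ℕ} (A : ℕ → Mat n) (i j : ℕ) :
    T1Block k A i j = (if i = j then (if i % 2 = 0 then A (k - i) else 0) else 0)
      + (if j = i + 1 ∧ i % 2 = 1 then 1 else 0)
      + (if i = j + 1 ∧ j % 2 = 1 then 1 else 0) := by
  unfold T1Block
  by_cases h1 : i = j
  · simp [h1, show ¬(j = j + 1 ∧ j % 2 = 1) from by omega]
  · simp only [if_neg h1]
    by_cases h2 : j = i + 1 ∧ i % 2 = 1
    · have h3 : ¬(i = j + 1 ∧ j % 2 = 1) := by omega
      simp only [h2, h3]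
      simp [h2.1]
      omega
    · by_cases h4 : i = j + 1 ∧ j % 2 = 1
      · simp only [h4]
        simp [h4.1]
        omega
      · simp [h2, h4]

end Aux

theorem stmt_11 {n k : ℕ} (hk : Odd k) (hk3 : 3 ≤ k) (A : ℕ → Mat n) (hAk : A k ≠ 0)
    (δ : ℂ) (x₁ x₂ : Fin n → ℂ)
    (h1 : Matrix.vecMul (star x₁) (Peval k A δ) = 0)
    (h2 : Peval k A δ *ᵥ x₂ = 0) :
    star ((DeltaB k A δ)ᴴ *ᵥ x₁) ⬝ᵥ (TT1 k A *ᵥ (Delta k A δ *ᵥ x₂))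
      = star x₁ ⬝ᵥ (Pderiv k A δ *ᵥ x₂) := by
  obtain ⟨m, hm⟩ := hk
  have hk' : k = 2*m+1 := by omega
  subst hk'
  clear hm hk3 hAk h1 h2
  -- reduce to a matrix identity
  have hv : star ((DeltaB (2*m+1) A δ)ᴴ *ᵥ x₁) = star x₁ ᵥ* DeltaB (2*m+1) A δ := by
    rw [Matrix.star_mulVec, Matrix.conjTranspose_conjTranspose]
  rw [hv, ← Matrix.dotProduct_mulVec, Matrix.mulVec_mulVec]
  have hmat : DeltaB (2*m+1) A δ * (TT1 (2*m+1) A * Delta (2*m+1) A δ)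
      = Pderiv (2*m+1) A δ := by
    set D : ℕ → Mat n := DeltaBlock (2*m+1) A δ with hD
    have hb : DeltaB (2*m+1) A δ * (TT1 (2*m+1) A * Delta (2*m+1) A δ)
        = ∑ q : Fin (2*m+1), ∑ p : Fin (2*m+1), D q.1 * T1Block (2*m+1) A q.1 p.1 * D p.1 :=
      blockMul (fun i => D i.1) (fun i => D i.1) (fun i j => T1Block (2*m+1) A i.1 j.1)
    rw [hb, Fin.sum_univ_eq_sum_range
        (fun q => ∑ p : Fin (2*m+1), D q * T1Block (2*m+1) A q p.1 * D p.1) (2*m+1)]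
    rw [Finset.sum_congr rfl (fun q _ =>
      Fin.sum_univ_eq_sum_range (fun p => D q * T1Block (2*m+1) A q p * D p) (2*m+1))]
    simp_rw [T1Block_split, mul_add, add_mul, Finset.sum_add_distrib]
    have hS1 : ∑ q ∈ Finset.range (2*m+1), ∑ p ∈ Finset.range (2*m+1),
        D q * (if q = p then (if q % 2 = 0 then A (2*m+1 - q) else 0) else 0) * D p
        = ∑ q ∈ Finset.range (2*m+1),
            (if q % 2 = 0 then δ^(2*m-q) • A (2*m+1-q) else 0) := by
      refine Finset.sum_congr rfl fun q hq => ?_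
      rw [Finset.mem_range] at hq
      have : ∀ p, D q * (if q = p then (if q % 2 = 0 then A (2*m+1 - q) else 0) else 0) * D p
          = if q = p then D q * (if q % 2 = 0 then A (2*m+1 - q) else 0) * D p else 0 := by
        intro p; split_ifs <;> simp
      rw [Finset.sum_congr rfl fun p _ => this p, Finset.sum_ite_eq,
        if_pos (Finset.mem_range.2 hq)]
      by_cases hq2 : q % 2 = 0
      · simp only [hq2, if_pos, hD, DeltaBlock, if_true]
        simp only [smul_mul_assoc, mul_smul_comm, Matrix.one_mul, Matrix.mul_one, smul_smul]
        rw [← pow_add, show (2*m+1-1-q)/2 + (2*m+1-1-q)/2 = 2*m-q from by omega]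
      · simp [hq2]
    have hS2 : ∑ q ∈ Finset.range (2*m+1), ∑ p ∈ Finset.range (2*m+1),
        D q * (if p = q + 1 ∧ q % 2 = 1 then 1 else 0) * D p
        = ∑ q ∈ Finset.range (2*m+1), (if q % 2 = 1 then D q * D (q+1) else 0) := by
      refine Finset.sum_congr rfl fun q hq => ?_
      rw [Finset.mem_range] at hq
      by_cases hq2 : q % 2 = 1
      · have : ∀ p, D q * (if p = q + 1 ∧ q % 2 = 1 then 1 else 0) * D p
            = if p = q + 1 then D q * D p else 0 := by
          intro p
          by_cases hp : p = q + 1 <;> simp [hp, hq2]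
        rw [Finset.sum_congr rfl fun p _ => this p, Finset.sum_ite_eq',
          if_pos (Finset.mem_range.2 (by omega : q + 1 < 2*m+1)), if_pos hq2]
      · have : ∀ p, D q * (if p = q + 1 ∧ q % 2 = 1 then 1 else 0) * D p = 0 := by
          intro p; simp [hq2]
        rw [Finset.sum_congr rfl fun p _ => this p]
        simp [hq2]
    have hS3 : ∑ q ∈ Finset.range (2*m+1), ∑ p ∈ Finset.range (2*m+1),
        D q * (if q = p + 1 ∧ p % 2 = 1 then 1 else 0) * D p
        = ∑ q ∈ Finset.range (2*m+1), (if q % 2 = 1 then D (q+1) * D q else 0) := by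
      rw [Finset.sum_comm]
      refine Finset.sum_congr rfl fun p hp => ?_
      rw [Finset.mem_range] at hp
      by_cases hp2 : p % 2 = 1
      · have : ∀ q, D q * (if q = p + 1 ∧ p % 2 = 1 then 1 else 0) * D p
            = if q = p + 1 then D q * D p else 0 := by
          intro q
          by_cases hqp : q = p + 1 <;> simp [hqp, hp2]
        rw [Finset.sum_congr rfl fun q _ => this q, Finset.sum_ite_eq',
          if_pos (Finset.mem_range.2 (by omega : p + 1 < 2*m+1)), if_pos hp2]
      · have : ∀ q, D q * (if q = p + 1 ∧ p % 2 = 1 then 1 else 0) * D p = 0 := by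
          intro q; simp [hp2]
        rw [Finset.sum_congr rfl fun q _ => this q]
        simp [hp2]
    rw [hS1, hS2, hS3, ← Finset.sum_add_distrib, ← Finset.sum_add_distrib]
    have hG : ∀ q ∈ Finset.range (2*m+1),
        ((if q % 2 = 0 then δ^(2*m-q) • A (2*m+1-q) else 0)
          + (if q % 2 = 1 then D q * D (q+1) else 0))
          + (if q % 2 = 1 then D (q+1) * D q else 0)
        = (if q % 2 = 0 then δ^(2*m-q) • A (2*m+1-q)
            else (2:ℂ) • (δ^(2*m-q) • horner (2*m+1) A q δ)) := by
      intro q hq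
      rw [Finset.mem_range] at hq
      by_cases hq2 : q % 2 = 0
      · simp [hq2]
      · have hq1 : q % 2 = 1 := by omega
        have hDq : D q = δ^((2*m+1-q)/2) • horner (2*m+1) A q δ := by
          rw [hD]; unfold DeltaBlock; rw [if_neg (by omega)]
        have hDq1 : D (q+1) = δ^((2*m+1-1-(q+1))/2) • (1 : Mat n) := by
          rw [hD]; unfold DeltaBlock; rw [if_pos (by omega)]
        rw [if_neg (by omega), if_pos hq1, if_pos hq1, if_neg (by omega), hDq, hDq1]
        simp only [smul_mul_assoc, mul_smul_comm, Matrix.mul_one, Matrix.one_mul, smul_smul,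
          zero_add]
        rw [← pow_add, ← pow_add,
          show (2*m+1-q)/2 + (2*m+1-1-(q+1))/2 = 2*m-q from by omega,
          show (2*m+1-1-(q+1))/2 + (2*m+1-q)/2 = 2*m-q from by omega, ← two_smul ℂ]
        rw [smul_smul]
    rw [Finset.sum_congr rfl hG, split_parity' _ m]
    rw [← Finset.sum_range_reflect (fun j => if (2*j) % 2 = 0 then δ^(2*m-2*j) • A (2*m+1-2*j)
          else (2:ℂ) • (δ^(2*m-2*j) • horner (2*m+1) A (2*j) δ)) (m+1)]
    rw [← Finset.sum_range_reflect (fun j => if (2*j+1) % 2 = 0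
          then δ^(2*m-(2*j+1)) • A (2*m+1-(2*j+1))
          else (2:ℂ) • (δ^(2*m-(2*j+1)) • horner (2*m+1) A (2*j+1) δ)) m]
    have hev : ∀ j ∈ Finset.range (m+1),
        (if (2*(m+1-1-j)) % 2 = 0 then δ^(2*m-2*(m+1-1-j)) • A (2*m+1-2*(m+1-1-j))
          else (2:ℂ) • (δ^(2*m-2*(m+1-1-j)) • horner (2*m+1) A (2*(m+1-1-j)) δ))
        = δ^(2*j) • A (2*j+1) := by
      intro j hj
      rw [Finset.mem_range] at hj
      rw [if_pos (by omega), show 2*m-2*(m+1-1-j) = 2*j from by omega,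
        show 2*m+1-2*(m+1-1-j) = 2*j+1 from by omega]
    have hod : ∀ j ∈ Finset.range m,
        (if (2*(m-1-j)+1) % 2 = 0 then δ^(2*m-(2*(m-1-j)+1)) • A (2*m+1-(2*(m-1-j)+1))
          else (2:ℂ) • (δ^(2*m-(2*(m-1-j)+1)) • horner (2*m+1) A (2*(m-1-j)+1) δ))
        = (2:ℂ) • ∑ t ∈ Finset.range (2*m-2*j), δ^(2*j+1+t) • A (2*j+2+t) := by
      intro j hj
      rw [Finset.mem_range] at hj
      rw [if_neg (by omega), show 2*m-(2*(m-1-j)+1) = 2*j+1 from by omega]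
      congr 1
      unfold horner
      rw [Finset.smul_sum, show 2*(m-1-j)+1+1 = 2*m-2*j from by omega]
      refine Finset.sum_congr rfl fun t _ => ?_
      rw [smul_smul, ← pow_add,
        show 2*m+1-(2*(m-1-j)+1)+t = 2*j+2+t from by omega]
    rw [Finset.sum_congr rfl hev, Finset.sum_congr rfl hod]
    exact key_sum δ A m
  rw [Matrix.mulVec_mulVec, Matrix.mul_assoc, hmat]
end MPoly
end
end
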